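/- Let OWRN be a One Way Road Network with n horizontal roads and m vertical roads, n, m ≥ 2, and let u, v be vertices such that v is reachable from u. Then there exists a directed walk from u to v whose length (number of edges) is minimal among all directed walks from u to v and which has at most four turns. -/

import Mathlib

/-- The directed edge relation of a One Way Road Network with `n` horizontal
roads and `m` vertical roads, determined by the direction functions `dx`, `dy`.
A vertex is a pair `(i, j) : Fin n × Fin m`. -/
def owrnEdge (n m : ℕ) (dx : Fin n → Bool) (dy : Fin m → Bool)
    (u v : Fin n × Fin m) : Prop :=
  (u.1 = v.1 ∧ dx u.1 = true  ∧ (v.2 : ℕ) = (u.2 : ℕ) + 1) ∨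
  (u.1 = v.1 ∧ dx u.1 = false ∧ (u.2 : ℕ) = (v.2 : ℕ) + 1) ∨
  (u.2 = v.2 ∧ dy u.2 = true  ∧ (v.1 : ℕ) = (u.1 : ℕ) + 1) ∨
  (u.2 = v.2 ∧ dy u.2 = false ∧ (u.1 : ℕ) = (v.1 : ℕ) + 1)

/-- `v` is reachable from `u` in the OWRN. -/
def owrnReachable (n m : ℕ) (dx : Fin n → Bool) (dy : Fin m → Bool)
    (u v : Fin n × Fin m) : Prop :=
  Relation.ReflTransGen (owrnEdge n m dx dy) u v

/-- `w 0, w 1, …, w k` is a directed walk of length `k` (number of edges)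
from `u` to `v` in the OWRN. -/
def owrnIsWalk (n m : ℕ) (dx : Fin n → Bool) (dy : Fin m → Bool)
    (k : ℕ) (w : ℕ → Fin n × Fin m) (u v : Fin n × Fin m) : Prop :=
  w 0 = u ∧ w k = v ∧ ∀ t < k, owrnEdge n m dx dy (w t) (w (t + 1))

/-- The number of turns of the walk `w 0, …, w k`: indices `t` with
`0 < t < k` at which the steps `t - 1` and `t` are of different types
(a step is horizontal iff it keeps the first coordinate fixed, vertical iff
it keeps the second coordinate fixed). -/
def owrnTurnCount (n m : ℕ) (k : ℕ) (w : ℕ → Fin n × Fin m) : ℕ :=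
  ((Finset.Ico 1 k).filter
    (fun t => ¬(((w (t - 1)).1 = (w t).1) ↔ ((w t).1 = (w (t + 1)).1)))).card

namespace OWRN

abbrev ZV : Type := ℤ × ℤ

def inB (N M : ℤ) (a : ZV) : Prop := 0 ≤ a.1 ∧ a.1 < N ∧ 0 ≤ a.2 ∧ a.2 < M

def ZE (N M : ℤ) (px py : ℤ → Bool) (a b : ZV) : Prop :=
  inB N M a ∧ inB N M b ∧
  ((a.1 = b.1 ∧ px a.1 = true ∧ b.2 = a.2 + 1) ∨
   (a.1 = b.1 ∧ px a.1 = false ∧ a.2 = b.2 + 1) ∨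
   (a.2 = b.2 ∧ py a.2 = true ∧ b.1 = a.1 + 1) ∨
   (a.2 = b.2 ∧ py a.2 = false ∧ a.1 = b.1 + 1))

def ZPath (N M : ℤ) (px py : ℤ → Bool) : ℕ → ZV → ZV → Prop
  | 0, a, b => a = b
  | k+1, a, b => ∃ c, ZE N M px py a c ∧ ZPath N M px py k c b

variable {N M : ℤ} {px py : ℤ → Bool}

theorem ZPath.trans : ∀ {k1 k2 : ℕ} {a b c : ZV},
    ZPath N M px py k1 a b → ZPath N M px py k2 b c → ZPath N M px py (k1 + k2) a c := by
  intro k1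
  induction k1 with
  | zero => intro k2 a b c h1 h2; cases h1; simpa using h2
  | succ k ih =>
    intro k2 a b c h1 h2
    obtain ⟨d, hd, hp⟩ := h1
    rw [Nat.succ_add]
    exact ⟨d, hd, ih hp h2⟩

theorem ZPath.snoc {k : ℕ} {a b c : ZV} (h1 : ZPath N M px py k a b)
    (h2 : ZE N M px py b c) : ZPath N M px py (k + 1) a c :=
  h1.trans ⟨c, h2, rfl⟩

theorem hpathR (i : ℤ) (hpx : px i = true) (h1 : 0 ≤ i) (h2 : i < N) :
    ∀ (d : ℕ) (j : ℤ), 0 ≤ j → j + d < M →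
      ZPath N M px py d (i, j) (i, j + d) := by
  intro d
  induction d with
  | zero => intro j _ _; simp [ZPath]
  | succ e ih =>
    intro j h3 h4
    have h4' : j + (e : ℤ) + 1 < M := by push_cast at h4; omega
    have he : ZE N M px py (i, j) (i, j + 1) :=
      ⟨⟨h1, h2, h3, by omega⟩, ⟨h1, h2, by omega, by omega⟩, Or.inl ⟨rfl, hpx, rfl⟩⟩
    have hp := ih (j + 1) (by omega) (by omega)
    refine ⟨(i, j + 1), he, ?_⟩
    rw [show j + ((e + 1 : ℕ) : ℤ) = (j + 1) + (e : ℤ) by push_cast; ring]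
    exact hp

theorem hpathL (i : ℤ) (hpx : px i = false) (h1 : 0 ≤ i) (h2 : i < N) :
    ∀ (d : ℕ) (j : ℤ), 0 ≤ j - d → j < M →
      ZPath N M px py d (i, j) (i, j - d) := by
  intro d
  induction d with
  | zero => intro j _ _; simp [ZPath]
  | succ e ih =>
    intro j h3 h4
    have h3' : 0 ≤ j - (e : ℤ) - 1 := by push_cast at h3; omega
    have he : ZE N M px py (i, j) (i, j - 1) :=
      ⟨⟨h1, h2, by omega, h4⟩, ⟨h1, h2, by omega, by omega⟩,
        Or.inr (Or.inl ⟨rfl, hpx, by ring⟩)⟩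
    have hp := ih (j - 1) (by omega) (by omega)
    refine ⟨(i, j - 1), he, ?_⟩
    rw [show j - ((e + 1 : ℕ) : ℤ) = (j - 1) - (e : ℤ) by push_cast; ring]
    exact hp

theorem vpathU (j : ℤ) (hpy : py j = true) (h3 : 0 ≤ j) (h4 : j < M) :
    ∀ (d : ℕ) (i : ℤ), 0 ≤ i → i + d < N →
      ZPath N M px py d (i, j) (i + d, j) := by
  intro d
  induction d with
  | zero => intro i _ _; simp [ZPath]
  | succ e ih =>
    intro i h1 h2
    have h2' : i + (e : ℤ) + 1 < N := by push_cast at h2; omega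
    have he : ZE N M px py (i, j) (i + 1, j) :=
      ⟨⟨h1, by omega, h3, h4⟩, ⟨by omega, by omega, h3, h4⟩,
        Or.inr (Or.inr (Or.inl ⟨rfl, hpy, rfl⟩))⟩
    have hp := ih (i + 1) (by omega) (by omega)
    refine ⟨(i + 1, j), he, ?_⟩
    rw [show i + ((e + 1 : ℕ) : ℤ) = (i + 1) + (e : ℤ) by push_cast; ring]
    exact hp

theorem vpathD (j : ℤ) (hpy : py j = false) (h3 : 0 ≤ j) (h4 : j < M) :
    ∀ (d : ℕ) (i : ℤ), 0 ≤ i - d → i < N →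
      ZPath N M px py d (i, j) (i - d, j) := by
  intro d
  induction d with
  | zero => intro i _ _; simp [ZPath]
  | succ e ih =>
    intro i h1 h2
    have h1' : 0 ≤ i - (e : ℤ) - 1 := by push_cast at h1; omega
    have he : ZE N M px py (i, j) (i - 1, j) :=
      ⟨⟨by omega, h2, h3, h4⟩, ⟨by omega, by omega, h3, h4⟩,
        Or.inr (Or.inr (Or.inr ⟨rfl, hpy, by ring⟩))⟩
    have hp := ih (i - 1) (by omega) (by omega)
    refine ⟨(i - 1, j), he, ?_⟩
    rw [show i - ((e + 1 : ℕ) : ℤ) = (i - 1) - (e : ℤ) by push_cast; ring]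
    exact hp

def segOk (N M : ℤ) (px py : ℤ → Bool) (a b : ZV) : Prop :=
  inB N M a ∧ inB N M b ∧
  ((a.1 = b.1 ∧ (a.2 < b.2 → px a.1 = true) ∧ (b.2 < a.2 → px a.1 = false)) ∨
   (a.2 = b.2 ∧ (a.1 < b.1 → py a.2 = true) ∧ (b.1 < a.1 → py a.2 = false)))

def dist (a b : ZV) : ℕ := (b.1 - a.1).natAbs + (b.2 - a.2).natAbs

theorem seg_path {a b : ZV} (h : segOk N M px py a b) :
    ZPath N M px py (dist a b) a b := by
  obtain ⟨i, j1⟩ := a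
  obtain ⟨i', j2⟩ := b
  obtain ⟨⟨a1, a2, a3, a4⟩, ⟨b1, b2, b3, b4⟩, h | h⟩ := h
  · obtain ⟨h1, h2, h3⟩ := h
    simp only at h1 h2 h3 a1 a2 a3 a4 b1 b2 b3 b4
    subst h1
    rcases lt_trichotomy j1 j2 with hc | hc | hc
    · have hp := hpathR (N := N) (M := M) (px := px) (py := py) i (h2 hc) a1 a2 (j2 - j1).toNat j1 a3
        (by omega)
      rw [show j1 + ((j2 - j1).toNat : ℤ) = j2 by omega] at hp
      have : dist (i, j1) (i, j2) = (j2 - j1).toNat := by simp [dist]; omega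
      rw [this]; exact hp
    · subst hc
      have : dist (i, j1) (i, j1) = 0 := by simp [dist]
      rw [this]; simp [ZPath]
    · have hp := hpathL (N := N) (M := M) (px := px) (py := py) i (h3 hc) a1 a2 (j1 - j2).toNat j1
        (by omega) a4
      rw [show j1 - ((j1 - j2).toNat : ℤ) = j2 by omega] at hp
      have : dist (i, j1) (i, j2) = (j1 - j2).toNat := by simp [dist]; omega
      rw [this]; exact hp
  · obtain ⟨h1, h2, h3⟩ := h
    simp only at h1 h2 h3 a1 a2 a3 a4 b1 b2 b3 b4
    subst h1
    rcases lt_trichotomy i i' with hc | hc | hc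
    · have hp := vpathU (N := N) (M := M) (px := px) (py := py) j1 (h2 hc) a3 a4 (i' - i).toNat i a1
        (by omega)
      rw [show i + ((i' - i).toNat : ℤ) = i' by omega] at hp
      have : dist (i, j1) (i', j1) = (i' - i).toNat := by simp [dist]; omega
      rw [this]; exact hp
    · subst hc
      have : dist (i, j1) (i, j1) = 0 := by simp [dist]
      rw [this]; simp [ZPath]
    · have hp := vpathD (N := N) (M := M) (px := px) (py := py) j1 (h3 hc) a3 a4 (i - i').toNat i
        (by omega) a2
      rw [show i - ((i - i').toNat : ℤ) = i' by omega] at hp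
      have : dist (i, j1) (i', j1) = (i - i').toNat := by simp [dist]; omega
      rw [this]; exact hp

-- chains of stations
def Chn (N M : ℤ) (px py : ℤ → Bool) : List ZV → Prop
  | [] => True
  | [_] => True
  | a :: b :: l => segOk N M px py a b ∧ Chn N M px py (b :: l)

def total : List ZV → ℕ
  | [] => 0
  | [_] => 0
  | a :: b :: l => dist a b + total (b :: l)

def lst : List ZV → ZV → Prop
  | [], _ => False
  | [a], x => a = x
  | _ :: b :: l, x => lst (b :: l) x

/-- reduced station chain: adjacent stations distinct, no two consecutive
segments along the same axis -/
inductive Red : List ZV → Prop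
  | nil : Red []
  | one (a : ZV) : Red [a]
  | two (a b : ZV) (h : a ≠ b) : Red [a, b]
  | cons (a b c : ZV) (l : List ZV) (hab : a ≠ b)
      (h1 : ¬(a.1 = b.1 ∧ b.1 = c.1)) (h2 : ¬(a.2 = b.2 ∧ b.2 = c.2))
      (ht : Red (b :: c :: l)) : Red (a :: b :: c :: l)

def Best (N M : ℤ) (px py : ℤ → Bool) (u v : ZV) (k : ℕ) : Prop :=
  ZPath N M px py k u v ∧ ∀ k', ZPath N M px py k' u v → k ≤ k'

variable {N M : ℤ} {px py : ℤ → Bool}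

theorem chn_path : ∀ (l : List ZV) (u : ZV), Chn N M px py (u :: l) →
    ZPath N M px py (total (u :: l)) u ((u :: l).getLast (by simp)) := by
  intro l
  induction l with
  | nil => intro u _; simp [total, ZPath]
  | cons b l ih =>
    intro u hc
    obtain ⟨h1, h2⟩ := hc
    have := ih b h2
    have ht : total (u :: b :: l) = dist u b + total (b :: l) := rfl
    rw [ht, List.getLast_cons (by simp)]
    exact (seg_path h1).trans this

theorem ZE_segOk {a b : ZV} (h : ZE N M px py a b) : segOk N M px py a b := by
  obtain ⟨h1, h2, h | h | h | h⟩ := h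
  · exact ⟨h1, h2, Or.inl ⟨h.1, fun _ => h.2.1, fun hlt => by omega⟩⟩
  · exact ⟨h1, h2, Or.inl ⟨h.1, fun hlt => by omega, fun _ => h.2.1⟩⟩
  · exact ⟨h1, h2, Or.inr ⟨h.1, fun _ => h.2.1, fun hlt => by omega⟩⟩
  · exact ⟨h1, h2, Or.inr ⟨h.1, fun hlt => by omega, fun _ => h.2.1⟩⟩

theorem ZE_dist {a b : ZV} (h : ZE N M px py a b) : dist a b = 1 := by
  obtain ⟨_, _, h | h | h | h⟩ := h <;>
    · obtain ⟨h1, _, h3⟩ := h; simp [dist]; omega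

theorem ZE_ne {a b : ZV} (h : ZE N M px py a b) : a ≠ b := by
  intro he; subst he
  obtain ⟨_, _, h | h | h | h⟩ := h <;> omega

theorem segOk_ne_cases {a b : ZV} (h : segOk N M px py a b) (hne : a ≠ b) :
    (a.1 = b.1 ∧ a.2 ≠ b.2) ∨ (a.2 = b.2 ∧ a.1 ≠ b.1) := by
  obtain ⟨_, _, h | h⟩ := h
  · refine Or.inl ⟨h.1, fun hc => hne ?_⟩
    exact Prod.ext h.1 hc
  · refine Or.inr ⟨h.1, fun hc => hne ?_⟩
    exact Prod.ext hc h.1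

/-- merging two collinear segments -/
theorem seg_merge {a b c : ZV} (h1 : segOk N M px py a b) (h2 : segOk N M px py b c)
    (hne1 : a ≠ b) (hne2 : b ≠ c)
    (hax : (a.1 = b.1 ∧ b.1 = c.1) ∨ (a.2 = b.2 ∧ b.2 = c.2)) :
    segOk N M px py a c ∧ dist a c = dist a b + dist b c ∧ a ≠ c := by
  obtain ⟨ha, hb, hor1⟩ := h1
  obtain ⟨_, hc, hor2⟩ := h2
  rcases hax with ⟨e1, e2⟩ | ⟨e1, e2⟩
  · -- same row
    have hd1 : a.2 ≠ b.2 := fun hh => hne1 (Prod.ext e1 hh)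
    have hd2 : b.2 ≠ c.2 := fun hh => hne2 (Prod.ext e2 hh)
    have w1 : (a.2 < b.2 → px a.1 = true) ∧ (b.2 < a.2 → px a.1 = false) := by
      rcases hor1 with ⟨_, p, q⟩ | ⟨p, _⟩
      · exact ⟨p, q⟩
      · exact absurd (Prod.ext e1 p) hne1
    have w2 : (b.2 < c.2 → px b.1 = true) ∧ (c.2 < b.2 → px b.1 = false) := by
      rcases hor2 with ⟨_, p, q⟩ | ⟨p, _⟩
      · exact ⟨p, q⟩
      · exact absurd (Prod.ext e2 p) hne2
    rw [← e1] at w2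
    have hmono : (a.2 < b.2 ∧ b.2 < c.2) ∨ (c.2 < b.2 ∧ b.2 < a.2) := by
      rcases Bool.eq_false_or_eq_true (px a.1) with hpx | hpx
      · refine Or.inl ⟨?_, ?_⟩
        · by_contra hcon
          have hlt : b.2 < a.2 := by omega
          simp [w1.2 hlt] at hpx
        · by_contra hcon
          have hlt : c.2 < b.2 := by omega
          simp [w2.2 hlt] at hpx
      · refine Or.inr ⟨?_, ?_⟩
        · by_contra hcon
          have hlt : b.2 < c.2 := by omega
          simp [w2.1 hlt] at hpx
        · by_contra hcon
          have hlt : a.2 < b.2 := by omega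
          simp [w1.1 hlt] at hpx
    refine ⟨⟨ha, hc, Or.inl ⟨e1.trans e2, fun _ => w1.1 (by omega), fun _ => w1.2 (by omega)⟩⟩,
      ?_, fun hh => ?_⟩
    · have := e1; have := e2
      simp only [dist]
      omega
    · rw [hh] at hmono; omega
  · -- same column
    have hd1 : a.1 ≠ b.1 := fun hh => hne1 (Prod.ext hh e1)
    have hd2 : b.1 ≠ c.1 := fun hh => hne2 (Prod.ext hh e2)
    have w1 : (a.1 < b.1 → py a.2 = true) ∧ (b.1 < a.1 → py a.2 = false) := by
      rcases hor1 with ⟨p, _⟩ | ⟨_, p, q⟩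
      · exact absurd (Prod.ext p e1) hne1
      · exact ⟨p, q⟩
    have w2 : (b.1 < c.1 → py b.2 = true) ∧ (c.1 < b.1 → py b.2 = false) := by
      rcases hor2 with ⟨p, _⟩ | ⟨_, p, q⟩
      · exact absurd (Prod.ext p e2) hne2
      · exact ⟨p, q⟩
    rw [← e1] at w2
    have hmono : (a.1 < b.1 ∧ b.1 < c.1) ∨ (c.1 < b.1 ∧ b.1 < a.1) := by
      rcases Bool.eq_false_or_eq_true (py a.2) with hpy | hpy
      · refine Or.inl ⟨?_, ?_⟩
        · by_contra hcon
          have hlt : b.1 < a.1 := by omega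
          simp [w1.2 hlt] at hpy
        · by_contra hcon
          have hlt : c.1 < b.1 := by omega
          simp [w2.2 hlt] at hpy
      · refine Or.inr ⟨?_, ?_⟩
        · by_contra hcon
          have hlt : b.1 < c.1 := by omega
          simp [w2.1 hlt] at hpy
        · by_contra hcon
          have hlt : a.1 < b.1 := by omega
          simp [w1.1 hlt] at hpy
    refine ⟨⟨ha, hc, Or.inr ⟨e1.trans e2, fun _ => w1.1 (by omega), fun _ => w1.2 (by omega)⟩⟩,
      ?_, fun hh => ?_⟩
    · have := e1; have := e2
      simp only [dist]
      omega
    · rw [hh] at hmono; omega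

def fst : List ZV → ZV → Prop
  | [], _ => False
  | a :: _, x => a = x

section Transport

variable {N' M' : ℤ} {px' py' : ℤ → Bool} {f : ZV → ZV}

theorem ZPath_map (hE : ∀ a b, ZE N M px py a b → ZE N' M' px' py' (f a) (f b)) :
    ∀ {k : ℕ} {a b : ZV}, ZPath N M px py k a b → ZPath N' M' px' py' k (f a) (f b) := by
  intro k
  induction k with
  | zero => intro a b h; cases h; rfl
  | succ e ih =>
    intro a b h
    obtain ⟨c, hc, hp⟩ := h
    exact ⟨f c, hE _ _ hc, ih hp⟩

theorem Best_map (hinv : ∀ a, f (f a) = a)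
    (hE : ∀ a b, ZE N M px py a b → ZE N' M' px' py' (f a) (f b))
    (hE' : ∀ a b, ZE N' M' px' py' a b → ZE N M px py (f a) (f b))
    {u v : ZV} {k : ℕ} (h : Best N M px py u v k) :
    Best N' M' px' py' (f u) (f v) k := by
  refine ⟨ZPath_map hE h.1, fun k' hp => h.2 k' ?_⟩
  have := ZPath_map hE' hp
  rwa [hinv, hinv] at this

theorem Chn_map (hseg : ∀ a b, segOk N M px py a b → segOk N' M' px' py' (f a) (f b)) :
    ∀ l : List ZV, Chn N M px py l → Chn N' M' px' py' (l.map f) := by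
  intro l
  induction l with
  | nil => intro; trivial
  | cons a t ih =>
    match t with
    | [] => intro; trivial
    | b :: t' => exact fun h => ⟨hseg _ _ h.1, ih h.2⟩

theorem total_map (hdist : ∀ a b : ZV, dist (f a) (f b) = dist a b) :
    ∀ l : List ZV, total (l.map f) = total l := by
  intro l
  induction l with
  | nil => rfl
  | cons a t ih =>
    match t with
    | [] => rfl
    | b :: t' =>
      show dist (f a) (f b) + total (f b :: t'.map f) = dist a b + total (b :: t')
      rw [hdist a b]
      have : total (f b :: t'.map f) = total (b :: t') := ih
      omega

theorem fst_map {l : List ZV} {x : ZV} (h : fst l x) : fst (l.map f) (f x) := by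
  match l with
  | [] => exact h.elim
  | a :: t => exact congrArg f h

theorem lst_map : ∀ (l : List ZV) (x : ZV), lst l x → lst (l.map f) (f x) := by
  intro l
  induction l with
  | nil => intro x h; exact h.elim
  | cons a t ih =>
    match t with
    | [] => exact fun x h => congrArg f h
    | b :: t' => exact fun x h => ih x h

theorem Red_map_keep (hinj : ∀ a b : ZV, f a = f b → a = b)
    (hax : ∀ a b : ZV, ((f a).1 = (f b).1 ↔ a.1 = b.1) ∧ ((f a).2 = (f b).2 ↔ a.2 = b.2)) :
    ∀ {l : List ZV}, Red l → Red (l.map f) := by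
  intro l h
  induction h with
  | nil => exact Red.nil
  | one a => exact Red.one _
  | two a b hab => exact Red.two _ _ (fun hc => hab (hinj _ _ hc))
  | cons a b c l hab h1 h2 ht iht =>
    refine Red.cons _ _ _ _ (fun hc => hab (hinj _ _ hc)) ?_ ?_ iht
    · intro ⟨q1, q2⟩; exact h1 ⟨(hax a b).1.mp q1, (hax b c).1.mp q2⟩
    · intro ⟨q1, q2⟩; exact h2 ⟨(hax a b).2.mp q1, (hax b c).2.mp q2⟩

theorem Red_map_swap (hinj : ∀ a b : ZV, f a = f b → a = b)
    (hax : ∀ a b : ZV, ((f a).1 = (f b).1 ↔ a.2 = b.2) ∧ ((f a).2 = (f b).2 ↔ a.1 = b.1)) :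
    ∀ {l : List ZV}, Red l → Red (l.map f) := by
  intro l h
  induction h with
  | nil => exact Red.nil
  | one a => exact Red.one _
  | two a b hab => exact Red.two _ _ (fun hc => hab (hinj _ _ hc))
  | cons a b c l hab h1 h2 ht iht =>
    refine Red.cons _ _ _ _ (fun hc => hab (hinj _ _ hc)) ?_ ?_ iht
    · intro ⟨q1, q2⟩; exact h2 ⟨(hax a b).1.mp q1, (hax b c).1.mp q2⟩
    · intro ⟨q1, q2⟩; exact h1 ⟨(hax a b).2.mp q1, (hax b c).2.mp q2⟩

end Transport

/-! ### the three concrete symmetries -/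

theorem ZE_swap {a b : ZV} (h : ZE N M px py a b) :
    ZE M N py px a.swap b.swap := by
  obtain ⟨⟨a1, a2, a3, a4⟩, ⟨b1, b2, b3, b4⟩, hh⟩ := h
  refine ⟨⟨a3, a4, a1, a2⟩, ⟨b3, b4, b1, b2⟩, ?_⟩
  rcases hh with ⟨p, q, r⟩ | ⟨p, q, r⟩ | ⟨p, q, r⟩ | ⟨p, q, r⟩
  · exact Or.inr (Or.inr (Or.inl ⟨p, q, r⟩))
  · exact Or.inr (Or.inr (Or.inr ⟨p, q, r⟩))
  · exact Or.inl ⟨p, q, r⟩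
  · exact Or.inr (Or.inl ⟨p, q, r⟩)

theorem segOk_swap {a b : ZV} (h : segOk N M px py a b) :
    segOk M N py px a.swap b.swap := by
  obtain ⟨⟨a1, a2, a3, a4⟩, ⟨b1, b2, b3, b4⟩, hh⟩ := h
  refine ⟨⟨a3, a4, a1, a2⟩, ⟨b3, b4, b1, b2⟩, ?_⟩
  rcases hh with ⟨p, q, r⟩ | ⟨p, q, r⟩
  · exact Or.inr ⟨p, q, r⟩
  · exact Or.inl ⟨p, q, r⟩

theorem dist_swap (a b : ZV) : dist a.swap b.swap = dist a b := by
  simp [dist, Prod.swap]; omega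

def xf (M : ℤ) (a : ZV) : ZV := (a.1, M - 1 - a.2)

theorem xf_inv (M : ℤ) (a : ZV) : xf M (xf M a) = a := by
  obtain ⟨x, y⟩ := a
  simp only [xf]
  rw [show M - 1 - (M - 1 - y) = y by ring]

theorem ZE_xf {a b : ZV} (h : ZE N M px py a b) :
    ZE N M (fun i => !px i) (fun j => py (M - 1 - j)) (xf M a) (xf M b) := by
  obtain ⟨⟨a1, a2, a3, a4⟩, ⟨b1, b2, b3, b4⟩, hh⟩ := h
  refine ⟨⟨a1, a2, by simp only [xf]; omega, by simp only [xf]; omega⟩,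
    ⟨b1, b2, by simp only [xf]; omega, by simp only [xf]; omega⟩, ?_⟩
  rcases hh with ⟨p, q, r⟩ | ⟨p, q, r⟩ | ⟨p, q, r⟩ | ⟨p, q, r⟩
  · exact Or.inr (Or.inl ⟨p, by simp [xf, q], by simp only [xf]; omega⟩)
  · exact Or.inl ⟨p, by simp [xf, q], by simp only [xf]; omega⟩
  · refine Or.inr (Or.inr (Or.inl ⟨by simp [xf, p], ?_, by simp only [xf]; omega⟩))
    show py (M - 1 - (M - 1 - a.2)) = true
    rw [show M - 1 - (M - 1 - a.2) = a.2 by ring]; exact q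
  · refine Or.inr (Or.inr (Or.inr ⟨by simp [xf, p], ?_, by simp only [xf]; omega⟩))
    show py (M - 1 - (M - 1 - a.2)) = false
    rw [show M - 1 - (M - 1 - a.2) = a.2 by ring]; exact q

theorem segOk_xf {a b : ZV} (h : segOk N M px py a b) :
    segOk N M (fun i => !px i) (fun j => py (M - 1 - j)) (xf M a) (xf M b) := by
  obtain ⟨⟨a1, a2, a3, a4⟩, ⟨b1, b2, b3, b4⟩, hh⟩ := h
  refine ⟨⟨a1, a2, by simp only [xf]; omega, by simp only [xf]; omega⟩,
    ⟨b1, b2, by simp only [xf]; omega, by simp only [xf]; omega⟩, ?_⟩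
  rcases hh with ⟨p, q, r⟩ | ⟨p, q, r⟩
  · refine Or.inl ⟨by simp [xf, p], ?_, ?_⟩
    · intro hlt
      simp only [xf] at hlt
      show (!px a.1) = true
      simp [r (by omega)]
    · intro hlt
      simp only [xf] at hlt
      show (!px a.1) = false
      simp [q (by omega)]
  · refine Or.inr ⟨by simp only [xf]; omega, ?_, ?_⟩
    · intro hlt
      simp only [xf] at hlt ⊢
      rw [show M - 1 - (M - 1 - a.2) = a.2 by ring]
      exact q (by omega)
    · intro hlt
      simp only [xf] at hlt ⊢
      rw [show M - 1 - (M - 1 - a.2) = a.2 by ring]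
      exact r (by omega)

theorem dist_xf (M : ℤ) (a b : ZV) : dist (xf M a) (xf M b) = dist a b := by
  simp [dist, xf]; omega

def yf (N : ℤ) (a : ZV) : ZV := (N - 1 - a.1, a.2)

theorem yf_inv (N : ℤ) (a : ZV) : yf N (yf N a) = a := by
  obtain ⟨x, y⟩ := a
  simp only [yf]
  rw [show N - 1 - (N - 1 - x) = x by ring]

theorem ZE_yf {a b : ZV} (h : ZE N M px py a b) :
    ZE N M (fun i => px (N - 1 - i)) (fun j => !py j) (yf N a) (yf N b) := by
  obtain ⟨⟨a1, a2, a3, a4⟩, ⟨b1, b2, b3, b4⟩, hh⟩ := h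
  refine ⟨⟨by simp only [yf]; omega, by simp only [yf]; omega, a3, a4⟩,
    ⟨by simp only [yf]; omega, by simp only [yf]; omega, b3, b4⟩, ?_⟩
  rcases hh with ⟨p, q, r⟩ | ⟨p, q, r⟩ | ⟨p, q, r⟩ | ⟨p, q, r⟩
  · refine Or.inl ⟨by simp [yf, p], ?_, by simp only [yf]; omega⟩
    show px (N - 1 - (N - 1 - a.1)) = true
    rw [show N - 1 - (N - 1 - a.1) = a.1 by ring]; exact q
  · refine Or.inr (Or.inl ⟨by simp [yf, p], ?_, by simp only [yf]; omega⟩)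
    show px (N - 1 - (N - 1 - a.1)) = false
    rw [show N - 1 - (N - 1 - a.1) = a.1 by ring]; exact q
  · exact Or.inr (Or.inr (Or.inr ⟨p, by simp [yf, q], by simp only [yf]; omega⟩))
  · exact Or.inr (Or.inr (Or.inl ⟨p, by simp [yf, q], by simp only [yf]; omega⟩))

theorem segOk_yf {a b : ZV} (h : segOk N M px py a b) :
    segOk N M (fun i => px (N - 1 - i)) (fun j => !py j) (yf N a) (yf N b) := by
  obtain ⟨⟨a1, a2, a3, a4⟩, ⟨b1, b2, b3, b4⟩, hh⟩ := h
  refine ⟨⟨by simp only [yf]; omega, by simp only [yf]; omega, a3, a4⟩,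
    ⟨by simp only [yf]; omega, by simp only [yf]; omega, b3, b4⟩, ?_⟩
  rcases hh with ⟨p, q, r⟩ | ⟨p, q, r⟩
  · refine Or.inl ⟨by simp only [yf]; omega, ?_, ?_⟩
    · intro hlt
      simp only [yf] at hlt ⊢
      rw [show N - 1 - (N - 1 - a.1) = a.1 by ring]
      exact q (by omega)
    · intro hlt
      simp only [yf] at hlt ⊢
      rw [show N - 1 - (N - 1 - a.1) = a.1 by ring]
      exact r (by omega)
  · refine Or.inr ⟨by simp [yf, p], ?_, ?_⟩
    · intro hlt
      simp only [yf] at hlt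
      show (!py a.2) = true
      simp [r (by omega)]
    · intro hlt
      simp only [yf] at hlt
      show (!py a.2) = false
      simp [q (by omega)]

theorem dist_yf (N : ℤ) (a b : ZV) : dist (yf N a) (yf N b) = dist a b := by
  simp [dist, yf]; omega

theorem segH (i j1 j2 : ℤ) (h1 : 0 ≤ i) (h2 : i < N) (h3 : 0 ≤ j1) (h4 : j1 < M)
    (h5 : 0 ≤ j2) (h6 : j2 < M)
    (ht : j1 < j2 → px i = true) (hf : j2 < j1 → px i = false) :
    segOk N M px py (i, j1) (i, j2) :=
  ⟨⟨h1, h2, h3, h4⟩, ⟨h1, h2, h5, h6⟩, Or.inl ⟨rfl, ht, hf⟩⟩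

theorem segV (j i1 i2 : ℤ) (h1 : 0 ≤ j) (h2 : j < M) (h3 : 0 ≤ i1) (h4 : i1 < N)
    (h5 : 0 ≤ i2) (h6 : i2 < N)
    (ht : i1 < i2 → py j = true) (hf : i2 < i1 → py j = false) :
    segOk N M px py (i1, j) (i2, j) :=
  ⟨⟨h3, h4, h1, h2⟩, ⟨h5, h6, h1, h2⟩, Or.inr ⟨rfl, ht, hf⟩⟩

theorem pathH (i j1 j2 : ℤ) (h1 : 0 ≤ i) (h2 : i < N) (h3 : 0 ≤ j1) (h4 : j1 < M)
    (h5 : 0 ≤ j2) (h6 : j2 < M)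
    (ht : j1 < j2 → px i = true) (hf : j2 < j1 → px i = false) :
    ZPath N M px py ((j2 - j1).natAbs) (i, j1) (i, j2) := by
  have := seg_path (segH i j1 j2 h1 h2 h3 h4 h5 h6 ht hf (py := py))
  simpa [dist] using this

theorem pathV (j i1 i2 : ℤ) (h1 : 0 ≤ j) (h2 : j < M) (h3 : 0 ≤ i1) (h4 : i1 < N)
    (h5 : 0 ≤ i2) (h6 : i2 < N)
    (ht : i1 < i2 → py j = true) (hf : i2 < i1 → py j = false) :
    ZPath N M px py ((i2 - i1).natAbs) (i1, j) (i2, j) := by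
  have := seg_path (segV j i1 i2 h1 h2 h3 h4 h5 h6 ht hf (px := px))
  simpa [dist] using this
theorem L6core (p1 p2 p3 p4 a0 a1 a2 a3 : ℤ) (k : ℕ)
    (bp1 : 0 ≤ p1) (bp1' : p1 < N) (bp2 : 0 ≤ p2) (bp2' : p2 < N)
    (bp3 : 0 ≤ p3) (bp3' : p3 < N) (bp4 : 0 ≤ p4) (bp4' : p4 < N)
    (ba0 : 0 ≤ a0) (ba0' : a0 < M) (ba1 : 0 ≤ a1) (ba1' : a1 < M)
    (ba2 : 0 ≤ a2) (ba2' : a2 < M) (ba3 : 0 ≤ a3) (ba3' : a3 < M)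
    (s1 : a0 < a1) (hx1 : px p1 = true)
    (t1 : p1 < p2) (hy1 : py a1 = true)
    (nA2 : a1 ≠ a2) (hx2t : a1 < a2 → px p2 = true) (hx2f : a2 < a1 → px p2 = false)
    (nP3 : p2 ≠ p3) (hy2t : p2 < p3 → py a2 = true) (hy2f : p3 < p2 → py a2 = false)
    (nA3 : a2 ≠ a3) (hx3t : a2 < a3 → px p3 = true) (hx3f : a3 < a2 → px p3 = false)
    (nP4 : p3 ≠ p4) (hy3t : p3 < p4 → py a3 = true) (hy3f : p4 < p3 → py a3 = false)
    (hk : k = (a1 - a0).natAbs + (p2 - p1).natAbs + (a2 - a1).natAbs +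
      (p3 - p2).natAbs + (a3 - a2).natAbs + (p4 - p3).natAbs)
    (hbest : Best N M px py (p1, a0) (p4, a3) k) :
    ∃ l : List ZV, Chn N M px py l ∧ fst l (p1, a0) ∧ lst l (p4, a3) ∧
      total l = k ∧ l.length ≤ 6 ∧ Red l := by
  rcases Bool.eq_false_or_eq_true (px p2) with hx2 | hx2
  · have s2 : a1 < a2 := by
      rcases lt_trichotomy a1 a2 with hq | hq | hq
      · exact hq
      · exact absurd hq nA2
      · exact Bool.noConfusion ((hx2f hq).symm.trans hx2)
    rcases Bool.eq_false_or_eq_true (py a2) with hy2 | hy2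
    · have t2 : p2 < p3 := by
        rcases lt_trichotomy p2 p3 with hq | hq | hq
        · exact hq
        · exact absurd hq nP3
        · exact Bool.noConfusion ((hy2f hq).symm.trans hy2)
      rcases Bool.eq_false_or_eq_true (px p3) with hx3 | hx3
      · have s3 : a2 < a3 := by
          rcases lt_trichotomy a2 a3 with hq | hq | hq
          · exact hq
          · exact absurd hq nA3
          · exact Bool.noConfusion ((hx3f hq).symm.trans hx3)
        rcases Bool.eq_false_or_eq_true (py a3) with hy3 | hy3
        · have t3 : p3 < p4 := by
            rcases lt_trichotomy p3 p4 with hq | hq | hq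
            · exact hq
            · exact absurd hq nP4
            · exact Bool.noConfusion ((hy3f hq).symm.trans hy3)
          refine ⟨[((p1 : ℤ), (a0 : ℤ)), ((p1 : ℤ), (a2 : ℤ)), ((p3 : ℤ), (a2 : ℤ)), ((p3 : ℤ), (a3 : ℤ)), ((p4 : ℤ), (a3 : ℤ))], ⟨?_, ?_, ?_, ?_, trivial⟩, rfl, rfl, ?_, by norm_num, ?_⟩
          · exact (segH p1 a0 a2 bp1 bp1' ba0 ba0' ba2 ba2' (fun _ => hx1) (fun hq => absurd hq (by omega)))
          · exact (segV a2 p1 p3 ba2 ba2' bp1 bp1' bp3 bp3' (fun _ => hy2) (fun hq => absurd hq (by omega)))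
          · exact (segH p3 a2 a3 bp3 bp3' ba2 ba2' ba3 ba3' (fun _ => hx3) (fun hq => absurd hq (by omega)))
          · exact (segV a3 p3 p4 ba3 ba3' bp3 bp3' bp4 bp4' (fun _ => hy3) (fun hq => absurd hq (by omega)))
          · simp [total, dist]; omega
          · exact Red.cons _ _ _ _ (by intro hq; simp [Prod.ext_iff] at hq; omega) (by rintro ⟨hq1, hq2⟩; simp at hq1 hq2 <;> omega) (by rintro ⟨hq1, hq2⟩; simp at hq1 hq2 <;> omega) (Red.cons _ _ _ _ (by intro hq; simp [Prod.ext_iff] at hq; omega) (by rintro ⟨hq1, hq2⟩; simp at hq1 hq2 <;> omega) (by rintro ⟨hq1, hq2⟩; simp at hq1 hq2 <;> omega) (Red.cons _ _ _ _ (by intro hq; simp [Prod.ext_iff] at hq; omega) (by rintro ⟨hq1, hq2⟩; simp at hq1 hq2 <;> omega) (by rintro ⟨hq1, hq2⟩; simp at hq1 hq2 <;> omega) (Red.two _ _ (by intro hq; simp [Prod.ext_iff] at hq; omega))))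
        · have t3 : p4 < p3 := by
            rcases lt_trichotomy p4 p3 with hq | hq | hq
            · exact hq
            · exact absurd hq.symm nP4
            · exact Bool.noConfusion ((hy3t hq).symm.trans hy3)
          refine ⟨[((p1 : ℤ), (a0 : ℤ)), ((p1 : ℤ), (a2 : ℤ)), ((p3 : ℤ), (a2 : ℤ)), ((p3 : ℤ), (a3 : ℤ)), ((p4 : ℤ), (a3 : ℤ))], ⟨?_, ?_, ?_, ?_, trivial⟩, rfl, rfl, ?_, by norm_num, ?_⟩
          · exact (segH p1 a0 a2 bp1 bp1' ba0 ba0' ba2 ba2' (fun _ => hx1) (fun hq => absurd hq (by omega)))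
          · exact (segV a2 p1 p3 ba2 ba2' bp1 bp1' bp3 bp3' (fun _ => hy2) (fun hq => absurd hq (by omega)))
          · exact (segH p3 a2 a3 bp3 bp3' ba2 ba2' ba3 ba3' (fun _ => hx3) (fun hq => absurd hq (by omega)))
          · exact (segV a3 p3 p4 ba3 ba3' bp3 bp3' bp4 bp4' (fun hq => absurd hq (by omega)) (fun _ => hy3))
          · simp [total, dist]; omega
          · exact Red.cons _ _ _ _ (by intro hq; simp [Prod.ext_iff] at hq; omega) (by rintro ⟨hq1, hq2⟩; simp at hq1 hq2 <;> omega) (by rintro ⟨hq1, hq2⟩; simp at hq1 hq2 <;> omega) (Red.cons _ _ _ _ (by intro hq; simp [Prod.ext_iff] at hq; omega) (by rintro ⟨hq1, hq2⟩; simp at hq1 hq2 <;> omega) (by rintro ⟨hq1, hq2⟩; simp at hq1 hq2 <;> omega) (Red.cons _ _ _ _ (by intro hq; simp [Prod.ext_iff] at hq; omega) (by rintro ⟨hq1, hq2⟩; simp at hq1 hq2 <;> omega) (by rintro ⟨hq1, hq2⟩; simp at hq1 hq2 <;> omega) (Red.two _ _ (by intro hq; simp [Prod.ext_iff] at hq;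 omega))))
      · have s3 : a3 < a2 := by
          rcases lt_trichotomy a3 a2 with hq | hq | hq
          · exact hq
          · exact absurd hq.symm nA3
          · exact Bool.noConfusion ((hx3t hq).symm.trans hx3)
        rcases Bool.eq_false_or_eq_true (py a3) with hy3 | hy3
        · have t3 : p3 < p4 := by
            rcases lt_trichotomy p3 p4 with hq | hq | hq
            · exact hq
            · exact absurd hq nP4
            · exact Bool.noConfusion ((hy3f hq).symm.trans hy3)
          refine ⟨[((p1 : ℤ), (a0 : ℤ)), ((p1 : ℤ), (a2 : ℤ)), ((p3 : ℤ), (a2 : ℤ)), ((p3 : ℤ), (a3 : ℤ)), ((p4 : ℤ), (a3 : ℤ))], ⟨?_, ?_, ?_, ?_, trivial⟩, rfl, rfl, ?_, by norm_num, ?_⟩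
          · exact (segH p1 a0 a2 bp1 bp1' ba0 ba0' ba2 ba2' (fun _ => hx1) (fun hq => absurd hq (by omega)))
          · exact (segV a2 p1 p3 ba2 ba2' bp1 bp1' bp3 bp3' (fun _ => hy2) (fun hq => absurd hq (by omega)))
          · exact (segH p3 a2 a3 bp3 bp3' ba2 ba2' ba3 ba3' (fun hq => absurd hq (by omega)) (fun _ => hx3))
          · exact (segV a3 p3 p4 ba3 ba3' bp3 bp3' bp4 bp4' (fun _ => hy3) (fun hq => absurd hq (by omega)))
          · simp [total, dist]; omega
          · exact Red.cons _ _ _ _ (by intro hq; simp [Prod.ext_iff] at hq; omega) (by rintro ⟨hq1, hq2⟩; simp at hq1 hq2 <;> omega) (by rintro ⟨hq1, hq2⟩; simp at hq1 hq2 <;> omega) (Red.cons _ _ _ _ (by intro hq; simp [Prod.ext_iff] at hq; omega) (by rintro ⟨hq1, hq2⟩; simp at hq1 hq2 <;> omega) (by rintro ⟨hq1, hq2⟩; simp at hq1 hq2 <;> omega) (Red.cons _ _ _ _ (by intro hq; simp [Prod.ext_iff] at hq; omega) (by rintro ⟨hq1, hq2⟩; simp at hq1 hq2 <;> omega) (by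 rintro ⟨hq1, hq2⟩; simp at hq1 hq2 <;> omega) (Red.two _ _ (by intro hq; simp [Prod.ext_iff] at hq; omega))))
        · have t3 : p4 < p3 := by
            rcases lt_trichotomy p4 p3 with hq | hq | hq
            · exact hq
            · exact absurd hq.symm nP4
            · exact Bool.noConfusion ((hy3t hq).symm.trans hy3)
          refine ⟨[((p1 : ℤ), (a0 : ℤ)), ((p1 : ℤ), (a2 : ℤ)), ((p3 : ℤ), (a2 : ℤ)), ((p3 : ℤ), (a3 : ℤ)), ((p4 : ℤ), (a3 : ℤ))], ⟨?_, ?_, ?_, ?_, trivial⟩, rfl, rfl, ?_, by norm_num, ?_⟩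
          · exact (segH p1 a0 a2 bp1 bp1' ba0 ba0' ba2 ba2' (fun _ => hx1) (fun hq => absurd hq (by omega)))
          · exact (segV a2 p1 p3 ba2 ba2' bp1 bp1' bp3 bp3' (fun _ => hy2) (fun hq => absurd hq (by omega)))
          · exact (segH p3 a2 a3 bp3 bp3' ba2 ba2' ba3 ba3' (fun hq => absurd hq (by omega)) (fun _ => hx3))
          · exact (segV a3 p3 p4 ba3 ba3' bp3 bp3' bp4 bp4' (fun hq => absurd hq (by omega)) (fun _ => hy3))
          · simp [total, dist]; omega
          · exact Red.cons _ _ _ _ (by intro hq; simp [Prod.ext_iff] at hq; omega) (by rintro ⟨hq1, hq2⟩; simp at hq1 hq2 <;> omega) (by rintro ⟨hq1, hq2⟩; simp at hq1 hq2 <;> omega) (Red.cons _ _ _ _ (by intro hq; simp [Prod.ext_iff] at hq; omega) (by rintro ⟨hq1, hq2⟩; simp at hq1 hq2 <;> omega) (by rintro ⟨hq1, hq2⟩; simp at hq1 hq2 <;> omega) (Red.cons _ _ _ _ (by intro hq; simp [Prod.ext_iff] at hq; omega) (by rintro ⟨hq1, hq2⟩; simp at hq1 hq2 <;> omega) (by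 rintro ⟨hq1, hq2⟩; simp at hq1 hq2 <;> omega) (Red.two _ _ (by intro hq; simp [Prod.ext_iff] at hq; omega))))
    · have t2 : p3 < p2 := by
        rcases lt_trichotomy p3 p2 with hq | hq | hq
        · exact hq
        · exact absurd hq.symm nP3
        · exact Bool.noConfusion ((hy2t hq).symm.trans hy2)
      rcases Bool.eq_false_or_eq_true (px p3) with hx3 | hx3
      · have s3 : a2 < a3 := by
          rcases lt_trichotomy a2 a3 with hq | hq | hq
          · exact hq
          · exact absurd hq nA3
          · exact Bool.noConfusion ((hx3f hq).symm.trans hx3)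
        rcases Bool.eq_false_or_eq_true (py a3) with hy3 | hy3
        · have t3 : p3 < p4 := by
            rcases lt_trichotomy p3 p4 with hq | hq | hq
            · exact hq
            · exact absurd hq nP4
            · exact Bool.noConfusion ((hy3f hq).symm.trans hy3)
          rcases le_or_gt p1 p3 with hg | hg
          · exact absurd (hbest.2 _ ((pathH p1 a0 a1 bp1 bp1' ba0 ba0' ba1 ba1' (fun _ => hx1) (fun hq => absurd hq (by omega))).trans ((pathV a1 p1 p3 ba1 ba1' bp1 bp1' bp3 bp3' (fun _ => hy1) (fun hq => absurd hq (by omega))).trans ((pathH p3 a1 a3 bp3 bp3' ba1 ba1' ba3 ba3' (fun _ => hx3) (fun hq => absurd hq (by omega))).trans (pathV a3 p3 p4 ba3 ba3' bp3 bp3' bp4 bp4' (fun _ => hy3) (fun hq => absurd hq (by omega))))))) (by omega)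
          · exact absurd (hbest.2 _ ((pathH p1 a0 a2 bp1 bp1' ba0 ba0' ba2 ba2' (fun _ => hx1) (fun hq => absurd hq (by omega))).trans ((pathV a2 p1 p3 ba2 ba2' bp1 bp1' bp3 bp3' (fun hq => absurd hq (by omega)) (fun _ => hy2)).trans ((pathH p3 a2 a3 bp3 bp3' ba2 ba2' ba3 ba3' (fun _ => hx3) (fun hq => absurd hq (by omega))).trans (pathV a3 p3 p4 ba3 ba3' bp3 bp3' bp4 bp4' (fun _ => hy3) (fun hq => absurd hq (by omega))))))) (by omega)
        · have t3 : p4 < p3 := by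
            rcases lt_trichotomy p4 p3 with hq | hq | hq
            · exact hq
            · exact absurd hq.symm nP4
            · exact Bool.noConfusion ((hy3t hq).symm.trans hy3)
          refine ⟨[((p1 : ℤ), (a0 : ℤ)), ((p1 : ℤ), (a1 : ℤ)), ((p2 : ℤ), (a1 : ℤ)), ((p2 : ℤ), (a3 : ℤ)), ((p4 : ℤ), (a3 : ℤ))], ⟨?_, ?_, ?_, ?_, trivial⟩, rfl, rfl, ?_, by norm_num, ?_⟩
          · exact (segH p1 a0 a1 bp1 bp1' ba0 ba0' ba1 ba1' (fun _ => hx1) (fun hq => absurd hq (by omega)))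
          · exact (segV a1 p1 p2 ba1 ba1' bp1 bp1' bp2 bp2' (fun _ => hy1) (fun hq => absurd hq (by omega)))
          · exact (segH p2 a1 a3 bp2 bp2' ba1 ba1' ba3 ba3' (fun _ => hx2) (fun hq => absurd hq (by omega)))
          · exact (segV a3 p2 p4 ba3 ba3' bp2 bp2' bp4 bp4' (fun hq => absurd hq (by omega)) (fun _ => hy3))
          · simp [total, dist]; omega
          · exact Red.cons _ _ _ _ (by intro hq; simp [Prod.ext_iff] at hq; omega) (by rintro ⟨hq1, hq2⟩; simp at hq1 hq2 <;> omega) (by rintro ⟨hq1, hq2⟩; simp at hq1 hq2 <;> omega) (Red.cons _ _ _ _ (by intro hq; simp [Prod.ext_iff] at hq; omega) (by rintro ⟨hq1, hq2⟩; simp at hq1 hq2 <;> omega) (by rintro ⟨hq1, hq2⟩; simp at hq1 hq2 <;> omega) (Red.cons _ _ _ _ (by intro hq; simp [Prod.ext_iff] at hq; omega) (by rintro ⟨hq1, hq2⟩; simp at hq1 hq2 <;> omega) (by rintro ⟨hq1, hq2⟩; simp at hq1 hq2 <;> omega) (Red.two _ _ (by intro hq; simp [Prod.ext_iff] at hq;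 omega))))
      · have s3 : a3 < a2 := by
          rcases lt_trichotomy a3 a2 with hq | hq | hq
          · exact hq
          · exact absurd hq.symm nA3
          · exact Bool.noConfusion ((hx3t hq).symm.trans hx3)
        rcases Bool.eq_false_or_eq_true (py a3) with hy3 | hy3
        · have t3 : p3 < p4 := by
            rcases lt_trichotomy p3 p4 with hq | hq | hq
            · exact hq
            · exact absurd hq nP4
            · exact Bool.noConfusion ((hy3f hq).symm.trans hy3)
          rcases le_or_gt p3 p1 with hg | hg
          · exact absurd (hbest.2 _ ((pathH p1 a0 a2 bp1 bp1' ba0 ba0' ba2 ba2' (fun _ => hx1) (fun hq => absurd hq (by omega))).trans ((pathV a2 p1 p3 ba2 ba2' bp1 bp1' bp3 bp3' (fun hq => absurd hq (by omega)) (fun _ => hy2)).trans ((pathH p3 a2 a3 bp3 bp3' ba2 ba2' ba3 ba3' (fun hq => absurd hq (by omega)) (fun _ => hx3)).trans (pathV a3 p3 p4 ba3 ba3' bp3 bp3' bp4 bp4' (fun _ => hy3) (fun hq => absurd hq (by omega))))))) (by omega)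
          · rcases le_or_gt a3 a1 with hg | hg
            · exact absurd (hbest.2 _ ((pathH p1 a0 a1 bp1 bp1' ba0 ba0' ba1 ba1' (fun _ => hx1) (fun hq => absurd hq (by omega))).trans ((pathV a1 p1 p3 ba1 ba1' bp1 bp1' bp3 bp3' (fun _ => hy1) (fun hq => absurd hq (by omega))).trans ((pathH p3 a1 a3 bp3 bp3' ba1 ba1' ba3 ba3' (fun hq => absurd hq (by omega)) (fun _ => hx3)).trans (pathV a3 p3 p4 ba3 ba3' bp3 bp3' bp4 bp4' (fun _ => hy3) (fun hq => absurd hq (by omega))))))) (by omega)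
            · exact absurd (hbest.2 _ ((pathH p1 a0 a3 bp1 bp1' ba0 ba0' ba3 ba3' (fun _ => hx1) (fun hq => absurd hq (by omega))).trans (pathV a3 p1 p4 ba3 ba3' bp1 bp1' bp4 bp4' (fun _ => hy3) (fun hq => absurd hq (by omega))))) (by omega)
        · have t3 : p4 < p3 := by
            rcases lt_trichotomy p4 p3 with hq | hq | hq
            · exact hq
            · exact absurd hq.symm nP4
            · exact Bool.noConfusion ((hy3t hq).symm.trans hy3)
          rcases le_or_gt p3 p1 with hg | hg
          · exact absurd (hbest.2 _ ((pathH p1 a0 a2 bp1 bp1' ba0 ba0' ba2 ba2' (fun _ => hx1) (fun hq => absurd hq (by omega))).trans ((pathV a2 p1 p3 ba2 ba2' bp1 bp1' bp3 bp3' (fun hq => absurd hq (by omega)) (fun _ => hy2)).trans ((pathH p3 a2 a3 bp3 bp3' ba2 ba2' ba3 ba3' (fun hq => absurd hq (by omega)) (fun _ => hx3)).trans (pathV a3 p3 p4 ba3 ba3' bp3 bp3' bp4 bp4' (fun hq => absurd hq (by omega)) (fun _ => hy3)))))) (by omega)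
          · rcases le_or_gt a3 a1 with hg | hg
            · exact absurd (hbest.2 _ ((pathH p1 a0 a1 bp1 bp1' ba0 ba0' ba1 ba1' (fun _ => hx1) (fun hq => absurd hq (by omega))).trans ((pathV a1 p1 p3 ba1 ba1' bp1 bp1' bp3 bp3' (fun _ => hy1) (fun hq => absurd hq (by omega))).trans ((pathH p3 a1 a3 bp3 bp3' ba1 ba1' ba3 ba3' (fun hq => absurd hq (by omega)) (fun _ => hx3)).trans (pathV a3 p3 p4 ba3 ba3' bp3 bp3' bp4 bp4' (fun hq => absurd hq (by omega)) (fun _ => hy3)))))) (by omega)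
            · exact absurd (hbest.2 _ ((pathH p1 a0 a1 bp1 bp1' ba0 ba0' ba1 ba1' (fun _ => hx1) (fun hq => absurd hq (by omega))).trans ((pathV a1 p1 p2 ba1 ba1' bp1 bp1' bp2 bp2' (fun _ => hy1) (fun hq => absurd hq (by omega))).trans ((pathH p2 a1 a3 bp2 bp2' ba1 ba1' ba3 ba3' (fun _ => hx2) (fun hq => absurd hq (by omega))).trans (pathV a3 p2 p4 ba3 ba3' bp2 bp2' bp4 bp4' (fun hq => absurd hq (by omega)) (fun _ => hy3)))))) (by omega)
  · have s2 : a2 < a1 := by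
      rcases lt_trichotomy a2 a1 with hq | hq | hq
      · exact hq
      · exact absurd hq.symm nA2
      · exact Bool.noConfusion ((hx2t hq).symm.trans hx2)
    rcases Bool.eq_false_or_eq_true (py a2) with hy2 | hy2
    · have t2 : p2 < p3 := by
        rcases lt_trichotomy p2 p3 with hq | hq | hq
        · exact hq
        · exact absurd hq nP3
        · exact Bool.noConfusion ((hy2f hq).symm.trans hy2)
      rcases Bool.eq_false_or_eq_true (px p3) with hx3 | hx3
      · have s3 : a2 < a3 := by
          rcases lt_trichotomy a2 a3 with hq | hq | hq
          · exact hq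
          · exact absurd hq nA3
          · exact Bool.noConfusion ((hx3f hq).symm.trans hx3)
        rcases Bool.eq_false_or_eq_true (py a3) with hy3 | hy3
        · have t3 : p3 < p4 := by
            rcases lt_trichotomy p3 p4 with hq | hq | hq
            · exact hq
            · exact absurd hq nP4
            · exact Bool.noConfusion ((hy3f hq).symm.trans hy3)
          rcases le_or_gt a1 a3 with hg | hg
          · exact absurd (hbest.2 _ ((pathH p1 a0 a1 bp1 bp1' ba0 ba0' ba1 ba1' (fun _ => hx1) (fun hq => absurd hq (by omega))).trans ((pathV a1 p1 p3 ba1 ba1' bp1 bp1' bp3 bp3' (fun _ => hy1) (fun hq => absurd hq (by omega))).trans ((pathH p3 a1 a3 bp3 bp3' ba1 ba1' ba3 ba3' (fun _ => hx3) (fun hq => absurd hq (by omega))).trans (pathV a3 p3 p4 ba3 ba3' bp3 bp3' bp4 bp4' (fun _ => hy3) (fun hq => absurd hq (by omega))))))) (by omega)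
          · exact absurd (hbest.2 _ ((pathH p1 a0 a1 bp1 bp1' ba0 ba0' ba1 ba1' (fun _ => hx1) (fun hq => absurd hq (by omega))).trans ((pathV a1 p1 p2 ba1 ba1' bp1 bp1' bp2 bp2' (fun _ => hy1) (fun hq => absurd hq (by omega))).trans ((pathH p2 a1 a3 bp2 bp2' ba1 ba1' ba3 ba3' (fun hq => absurd hq (by omega)) (fun _ => hx2)).trans (pathV a3 p2 p4 ba3 ba3' bp2 bp2' bp4 bp4' (fun _ => hy3) (fun hq => absurd hq (by omega))))))) (by omega)
        · have t3 : p4 < p3 := by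
            rcases lt_trichotomy p4 p3 with hq | hq | hq
            · exact hq
            · exact absurd hq.symm nP4
            · exact Bool.noConfusion ((hy3t hq).symm.trans hy3)
          rcases le_or_gt a1 a3 with hg | hg
          · exact absurd (hbest.2 _ ((pathH p1 a0 a1 bp1 bp1' ba0 ba0' ba1 ba1' (fun _ => hx1) (fun hq => absurd hq (by omega))).trans ((pathV a1 p1 p3 ba1 ba1' bp1 bp1' bp3 bp3' (fun _ => hy1) (fun hq => absurd hq (by omega))).trans ((pathH p3 a1 a3 bp3 bp3' ba1 ba1' ba3 ba3' (fun _ => hx3) (fun hq => absurd hq (by omega))).trans (pathV a3 p3 p4 ba3 ba3' bp3 bp3' bp4 bp4' (fun hq => absurd hq (by omega)) (fun _ => hy3)))))) (by omega)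
          · rcases le_or_gt p4 p2 with hg | hg
            · exact absurd (hbest.2 _ ((pathH p1 a0 a1 bp1 bp1' ba0 ba0' ba1 ba1' (fun _ => hx1) (fun hq => absurd hq (by omega))).trans ((pathV a1 p1 p2 ba1 ba1' bp1 bp1' bp2 bp2' (fun _ => hy1) (fun hq => absurd hq (by omega))).trans ((pathH p2 a1 a3 bp2 bp2' ba1 ba1' ba3 ba3' (fun hq => absurd hq (by omega)) (fun _ => hx2)).trans (pathV a3 p2 p4 ba3 ba3' bp2 bp2' bp4 bp4' (fun hq => absurd hq (by omega)) (fun _ => hy3)))))) (by omega)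
            · rcases Bool.eq_false_or_eq_true (px p4) with hx4 | hx4
              · exact absurd (hbest.2 _ ((pathH p1 a0 a1 bp1 bp1' ba0 ba0' ba1 ba1' (fun _ => hx1) (fun hq => absurd hq (by omega))).trans ((pathV a1 p1 p2 ba1 ba1' bp1 bp1' bp2 bp2' (fun _ => hy1) (fun hq => absurd hq (by omega))).trans ((pathH p2 a1 a2 bp2 bp2' ba1 ba1' ba2 ba2' (fun hq => absurd hq (by omega)) (fun _ => hx2)).trans ((pathV a2 p2 p4 ba2 ba2' bp2 bp2' bp4 bp4' (fun _ => hy2) (fun hq => absurd hq (by omega))).trans (pathH p4 a2 a3 bp4 bp4' ba2 ba2' ba3 ba3' (fun _ => hx4) (fun hq => absurd hq (by omega)))))))) (by omega)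
              · exact absurd (hbest.2 _ ((pathH p1 a0 a1 bp1 bp1' ba0 ba0' ba1 ba1' (fun _ => hx1) (fun hq => absurd hq (by omega))).trans ((pathV a1 p1 p4 ba1 ba1' bp1 bp1' bp4 bp4' (fun _ => hy1) (fun hq => absurd hq (by omega))).trans (pathH p4 a1 a3 bp4 bp4' ba1 ba1' ba3 ba3' (fun hq => absurd hq (by omega)) (fun _ => hx4))))) (by omega)
      · have s3 : a3 < a2 := by
          rcases lt_trichotomy a3 a2 with hq | hq | hq
          · exact hq
          · exact absurd hq.symm nA3
          · exact Bool.noConfusion ((hx3t hq).symm.trans hx3)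
        rcases Bool.eq_false_or_eq_true (py a3) with hy3 | hy3
        · have t3 : p3 < p4 := by
            rcases lt_trichotomy p3 p4 with hq | hq | hq
            · exact hq
            · exact absurd hq nP4
            · exact Bool.noConfusion ((hy3f hq).symm.trans hy3)
          refine ⟨[((p1 : ℤ), (a0 : ℤ)), ((p1 : ℤ), (a1 : ℤ)), ((p3 : ℤ), (a1 : ℤ)), ((p3 : ℤ), (a3 : ℤ)), ((p4 : ℤ), (a3 : ℤ))], ⟨?_, ?_, ?_, ?_, trivial⟩, rfl, rfl, ?_, by norm_num, ?_⟩
          · exact (segH p1 a0 a1 bp1 bp1' ba0 ba0' ba1 ba1' (fun _ => hx1) (fun hq => absurd hq (by omega)))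
          · exact (segV a1 p1 p3 ba1 ba1' bp1 bp1' bp3 bp3' (fun _ => hy1) (fun hq => absurd hq (by omega)))
          · exact (segH p3 a1 a3 bp3 bp3' ba1 ba1' ba3 ba3' (fun hq => absurd hq (by omega)) (fun _ => hx3))
          · exact (segV a3 p3 p4 ba3 ba3' bp3 bp3' bp4 bp4' (fun _ => hy3) (fun hq => absurd hq (by omega)))
          · simp [total, dist]; omega
          · exact Red.cons _ _ _ _ (by intro hq; simp [Prod.ext_iff] at hq; omega) (by rintro ⟨hq1, hq2⟩; simp at hq1 hq2 <;> omega) (by rintro ⟨hq1, hq2⟩; simp at hq1 hq2 <;> omega) (Red.cons _ _ _ _ (by intro hq; simp [Prod.ext_iff] at hq; omega) (by rintro ⟨hq1, hq2⟩; simp at hq1 hq2 <;> omega) (by rintro ⟨hq1, hq2⟩; simp at hq1 hq2 <;> omega) (Red.cons _ _ _ _ (by intro hq; simp [Prod.ext_iff] at hq; omega) (by rintro ⟨hq1, hq2⟩; simp at hq1 hq2 <;> omega) (by rintro ⟨hq1, hq2⟩; simp at hq1 hq2 <;> omega) (Red.two _ _ (by intro hq; simp [Prod.ext_iff] at hq;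 omega))))
        · have t3 : p4 < p3 := by
            rcases lt_trichotomy p4 p3 with hq | hq | hq
            · exact hq
            · exact absurd hq.symm nP4
            · exact Bool.noConfusion ((hy3t hq).symm.trans hy3)
          refine ⟨[((p1 : ℤ), (a0 : ℤ)), ((p1 : ℤ), (a1 : ℤ)), ((p3 : ℤ), (a1 : ℤ)), ((p3 : ℤ), (a3 : ℤ)), ((p4 : ℤ), (a3 : ℤ))], ⟨?_, ?_, ?_, ?_, trivial⟩, rfl, rfl, ?_, by norm_num, ?_⟩
          · exact (segH p1 a0 a1 bp1 bp1' ba0 ba0' ba1 ba1' (fun _ => hx1) (fun hq => absurd hq (by omega)))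
          · exact (segV a1 p1 p3 ba1 ba1' bp1 bp1' bp3 bp3' (fun _ => hy1) (fun hq => absurd hq (by omega)))
          · exact (segH p3 a1 a3 bp3 bp3' ba1 ba1' ba3 ba3' (fun hq => absurd hq (by omega)) (fun _ => hx3))
          · exact (segV a3 p3 p4 ba3 ba3' bp3 bp3' bp4 bp4' (fun hq => absurd hq (by omega)) (fun _ => hy3))
          · simp [total, dist]; omega
          · exact Red.cons _ _ _ _ (by intro hq; simp [Prod.ext_iff] at hq; omega) (by rintro ⟨hq1, hq2⟩; simp at hq1 hq2 <;> omega) (by rintro ⟨hq1, hq2⟩; simp at hq1 hq2 <;> omega) (Red.cons _ _ _ _ (by intro hq; simp [Prod.ext_iff] at hq; omega) (by rintro ⟨hq1, hq2⟩; simp at hq1 hq2 <;> omega) (by rintro ⟨hq1, hq2⟩; simp at hq1 hq2 <;> omega) (Red.cons _ _ _ _ (by intro hq; simp [Prod.ext_iff] at hq; omega) (by rintro ⟨hq1, hq2⟩; simp at hq1 hq2 <;> omega) (by rintro ⟨hq1, hq2⟩; simp at hq1 hq2 <;> omega) (Red.two _ _ (by intro hq; simp [Prod.ext_iff] at hq;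 omega))))
    · have t2 : p3 < p2 := by
        rcases lt_trichotomy p3 p2 with hq | hq | hq
        · exact hq
        · exact absurd hq.symm nP3
        · exact Bool.noConfusion ((hy2t hq).symm.trans hy2)
      rcases Bool.eq_false_or_eq_true (px p3) with hx3 | hx3
      · have s3 : a2 < a3 := by
          rcases lt_trichotomy a2 a3 with hq | hq | hq
          · exact hq
          · exact absurd hq nA3
          · exact Bool.noConfusion ((hx3f hq).symm.trans hx3)
        rcases Bool.eq_false_or_eq_true (py a3) with hy3 | hy3
        · have t3 : p3 < p4 := by
            rcases lt_trichotomy p3 p4 with hq | hq | hq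
            · exact hq
            · exact absurd hq nP4
            · exact Bool.noConfusion ((hy3f hq).symm.trans hy3)
          rcases le_or_gt p1 p3 with hg | hg
          · rcases le_or_gt a1 a3 with hg | hg
            · exact absurd (hbest.2 _ ((pathH p1 a0 a1 bp1 bp1' ba0 ba0' ba1 ba1' (fun _ => hx1) (fun hq => absurd hq (by omega))).trans ((pathV a1 p1 p3 ba1 ba1' bp1 bp1' bp3 bp3' (fun _ => hy1) (fun hq => absurd hq (by omega))).trans ((pathH p3 a1 a3 bp3 bp3' ba1 ba1' ba3 ba3' (fun _ => hx3) (fun hq => absurd hq (by omega))).trans (pathV a3 p3 p4 ba3 ba3' bp3 bp3' bp4 bp4' (fun _ => hy3) (fun hq => absurd hq (by omega))))))) (by omega)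
            · rcases le_or_gt p2 p4 with hg | hg
              · exact absurd (hbest.2 _ ((pathH p1 a0 a1 bp1 bp1' ba0 ba0' ba1 ba1' (fun _ => hx1) (fun hq => absurd hq (by omega))).trans ((pathV a1 p1 p2 ba1 ba1' bp1 bp1' bp2 bp2' (fun _ => hy1) (fun hq => absurd hq (by omega))).trans ((pathH p2 a1 a3 bp2 bp2' ba1 ba1' ba3 ba3' (fun hq => absurd hq (by omega)) (fun _ => hx2)).trans (pathV a3 p2 p4 ba3 ba3' bp2 bp2' bp4 bp4' (fun _ => hy3) (fun hq => absurd hq (by omega))))))) (by omega)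
              · rcases Bool.eq_false_or_eq_true (px p4) with hx4 | hx4
                · exact absurd (hbest.2 _ ((pathH p1 a0 a1 bp1 bp1' ba0 ba0' ba1 ba1' (fun _ => hx1) (fun hq => absurd hq (by omega))).trans ((pathV a1 p1 p2 ba1 ba1' bp1 bp1' bp2 bp2' (fun _ => hy1) (fun hq => absurd hq (by omega))).trans ((pathH p2 a1 a2 bp2 bp2' ba1 ba1' ba2 ba2' (fun hq => absurd hq (by omega)) (fun _ => hx2)).trans ((pathV a2 p2 p4 ba2 ba2' bp2 bp2' bp4 bp4' (fun hq => absurd hq (by omega)) (fun _ => hy2)).trans (pathH p4 a2 a3 bp4 bp4' ba2 ba2' ba3 ba3' (fun _ => hx4) (fun hq => absurd hq (by omega)))))))) (by omega)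
                · rcases le_or_gt p1 p4 with hg | hg
                  · exact absurd (hbest.2 _ ((pathH p1 a0 a1 bp1 bp1' ba0 ba0' ba1 ba1' (fun _ => hx1) (fun hq => absurd hq (by omega))).trans ((pathV a1 p1 p4 ba1 ba1' bp1 bp1' bp4 bp4' (fun _ => hy1) (fun hq => absurd hq (by omega))).trans (pathH p4 a1 a3 bp4 bp4' ba1 ba1' ba3 ba3' (fun hq => absurd hq (by omega)) (fun _ => hx4))))) (by omega)
                  · exact absurd t3 (by omega)
          · rcases le_or_gt a0 a2 with hg | hg
            · exact absurd (hbest.2 _ ((pathH p1 a0 a2 bp1 bp1' ba0 ba0' ba2 ba2' (fun _ => hx1) (fun hq => absurd hq (by omega))).trans ((pathV a2 p1 p3 ba2 ba2' bp1 bp1' bp3 bp3' (fun hq => absurd hq (by omega)) (fun _ => hy2)).trans ((pathH p3 a2 a3 bp3 bp3' ba2 ba2' ba3 ba3' (fun _ => hx3) (fun hq => absurd hq (by omega))).trans (pathV a3 p3 p4 ba3 ba3' bp3 bp3' bp4 bp4' (fun _ => hy3) (fun hq => absurd hq (by omega))))))) (by omega)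
            · rcases le_or_gt a0 a3 with hg | hg
              · rcases le_or_gt p1 p4 with hg | hg
                · exact absurd (hbest.2 _ ((pathH p1 a0 a3 bp1 bp1' ba0 ba0' ba3 ba3' (fun _ => hx1) (fun hq => absurd hq (by omega))).trans (pathV a3 p1 p4 ba3 ba3' bp1 bp1' bp4 bp4' (fun _ => hy3) (fun hq => absurd hq (by omega))))) (by omega)
                · rcases Bool.eq_false_or_eq_true (py a0) with hy0 | hy0
                  · exact absurd (hbest.2 _ ((pathV a0 p1 p2 ba0 ba0' bp1 bp1' bp2 bp2' (fun _ => hy0) (fun hq => absurd hq (by omega))).trans ((pathH p2 a0 a2 bp2 bp2' ba0 ba0' ba2 ba2' (fun hq => absurd hq (by omega)) (fun _ => hx2)).trans ((pathV a2 p2 p3 ba2 ba2' bp2 bp2' bp3 bp3' (fun hq => absurd hq (by omega)) (fun _ => hy2)).trans ((pathH p3 a2 a3 bp3 bp3' ba2 ba2' ba3 ba3' (fun _ => hx3) (fun hq => absurd hq (by omega))).trans (pathV a3 p3 p4 ba3 ba3' bp3 bp3' bp4 bp4' (fun _ => hy3) (fun hq => absurd hq (by omega)))))))) (by omega)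
                  · exact absurd (hbest.2 _ ((pathV a0 p1 p3 ba0 ba0' bp1 bp1' bp3 bp3' (fun hq => absurd hq (by omega)) (fun _ => hy0)).trans ((pathH p3 a0 a3 bp3 bp3' ba0 ba0' ba3 ba3' (fun _ => hx3) (fun hq => absurd hq (by omega))).trans (pathV a3 p3 p4 ba3 ba3' bp3 bp3' bp4 bp4' (fun _ => hy3) (fun hq => absurd hq (by omega)))))) (by omega)
              · rcases Bool.eq_false_or_eq_true (py a0) with hy0 | hy0
                · exact absurd (hbest.2 _ ((pathV a0 p1 p2 ba0 ba0' bp1 bp1' bp2 bp2' (fun _ => hy0) (fun hq => absurd hq (by omega))).trans ((pathH p2 a0 a2 bp2 bp2' ba0 ba0' ba2 ba2' (fun hq => absurd hq (by omega)) (fun _ => hx2)).trans ((pathV a2 p2 p3 ba2 ba2' bp2 bp2' bp3 bp3' (fun hq => absurd hq (by omega)) (fun _ => hy2)).trans ((pathH p3 a2 a3 bp3 bp3' ba2 ba2' ba3 ba3' (fun _ => hx3) (fun hq => absurd hq (by omega))).trans (pathV a3 p3 p4 ba3 ba3' bp3 bp3' bp4 bp4' (fun _ => hy3) (fun hq =>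 absurd hq (by omega)))))))) (by omega)
                · rcases Bool.eq_false_or_eq_true (px p4) with hx4 | hx4
                  · rcases le_or_gt p4 p2 with hg | hg
                    · exact absurd (hbest.2 _ ((pathH p1 a0 a1 bp1 bp1' ba0 ba0' ba1 ba1' (fun _ => hx1) (fun hq => absurd hq (by omega))).trans ((pathV a1 p1 p2 ba1 ba1' bp1 bp1' bp2 bp2' (fun _ => hy1) (fun hq => absurd hq (by omega))).trans ((pathH p2 a1 a2 bp2 bp2' ba1 ba1' ba2 ba2' (fun hq => absurd hq (by omega)) (fun _ => hx2)).trans ((pathV a2 p2 p4 ba2 ba2' bp2 bp2' bp4 bp4' (fun hq => absurd hq (by omega)) (fun _ => hy2)).trans (pathH p4 a2 a3 bp4 bp4' ba2 ba2' ba3 ba3' (fun _ => hx4) (fun hq => absurd hq (by omega)))))))) (by omega)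
                    · exact absurd (hbest.2 _ ((pathH p1 a0 a1 bp1 bp1' ba0 ba0' ba1 ba1' (fun _ => hx1) (fun hq => absurd hq (by omega))).trans ((pathV a1 p1 p2 ba1 ba1' bp1 bp1' bp2 bp2' (fun _ => hy1) (fun hq => absurd hq (by omega))).trans ((pathH p2 a1 a3 bp2 bp2' ba1 ba1' ba3 ba3' (fun hq => absurd hq (by omega)) (fun _ => hx2)).trans (pathV a3 p2 p4 ba3 ba3' bp2 bp2' bp4 bp4' (fun _ => hy3) (fun hq => absurd hq (by omega))))))) (by omega)
                  · rcases le_or_gt p1 p4 with hg | hg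
                    · exact absurd (hbest.2 _ ((pathH p1 a0 a1 bp1 bp1' ba0 ba0' ba1 ba1' (fun _ => hx1) (fun hq => absurd hq (by omega))).trans ((pathV a1 p1 p4 ba1 ba1' bp1 bp1' bp4 bp4' (fun _ => hy1) (fun hq => absurd hq (by omega))).trans (pathH p4 a1 a3 bp4 bp4' ba1 ba1' ba3 ba3' (fun hq => absurd hq (by omega)) (fun _ => hx4))))) (by omega)
                    · exact absurd (hbest.2 _ ((pathV a0 p1 p4 ba0 ba0' bp1 bp1' bp4 bp4' (fun hq => absurd hq (by omega)) (fun _ => hy0)).trans (pathH p4 a0 a3 bp4 bp4' ba0 ba0' ba3 ba3' (fun hq => absurd hq (by omega)) (fun _ => hx4)))) (by omega)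
        · have t3 : p4 < p3 := by
            rcases lt_trichotomy p4 p3 with hq | hq | hq
            · exact hq
            · exact absurd hq.symm nP4
            · exact Bool.noConfusion ((hy3t hq).symm.trans hy3)
          rcases le_or_gt a3 a1 with hg | hg
          · exact absurd (hbest.2 _ ((pathH p1 a0 a1 bp1 bp1' ba0 ba0' ba1 ba1' (fun _ => hx1) (fun hq => absurd hq (by omega))).trans ((pathV a1 p1 p2 ba1 ba1' bp1 bp1' bp2 bp2' (fun _ => hy1) (fun hq => absurd hq (by omega))).trans ((pathH p2 a1 a3 bp2 bp2' ba1 ba1' ba3 ba3' (fun hq => absurd hq (by omega)) (fun _ => hx2)).trans (pathV a3 p2 p4 ba3 ba3' bp2 bp2' bp4 bp4' (fun hq => absurd hq (by omega)) (fun _ => hy3)))))) (by omega)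
          · rcases le_or_gt p1 p3 with hg | hg
            · exact absurd (hbest.2 _ ((pathH p1 a0 a1 bp1 bp1' ba0 ba0' ba1 ba1' (fun _ => hx1) (fun hq => absurd hq (by omega))).trans ((pathV a1 p1 p3 ba1 ba1' bp1 bp1' bp3 bp3' (fun _ => hy1) (fun hq => absurd hq (by omega))).trans ((pathH p3 a1 a3 bp3 bp3' ba1 ba1' ba3 ba3' (fun _ => hx3) (fun hq => absurd hq (by omega))).trans (pathV a3 p3 p4 ba3 ba3' bp3 bp3' bp4 bp4' (fun hq => absurd hq (by omega)) (fun _ => hy3)))))) (by omega)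
            · exact absurd (hbest.2 _ ((pathH p1 a0 a3 bp1 bp1' ba0 ba0' ba3 ba3' (fun _ => hx1) (fun hq => absurd hq (by omega))).trans (pathV a3 p1 p4 ba3 ba3' bp1 bp1' bp4 bp4' (fun hq => absurd hq (by omega)) (fun _ => hy3)))) (by omega)
      · have s3 : a3 < a2 := by
          rcases lt_trichotomy a3 a2 with hq | hq | hq
          · exact hq
          · exact absurd hq.symm nA3
          · exact Bool.noConfusion ((hx3t hq).symm.trans hx3)
        rcases Bool.eq_false_or_eq_true (py a3) with hy3 | hy3
        · have t3 : p3 < p4 := by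
            rcases lt_trichotomy p3 p4 with hq | hq | hq
            · exact hq
            · exact absurd hq nP4
            · exact Bool.noConfusion ((hy3f hq).symm.trans hy3)
          rcases le_or_gt p1 p3 with hg | hg
          · exact absurd (hbest.2 _ ((pathH p1 a0 a1 bp1 bp1' ba0 ba0' ba1 ba1' (fun _ => hx1) (fun hq => absurd hq (by omega))).trans ((pathV a1 p1 p3 ba1 ba1' bp1 bp1' bp3 bp3' (fun _ => hy1) (fun hq => absurd hq (by omega))).trans ((pathH p3 a1 a3 bp3 bp3' ba1 ba1' ba3 ba3' (fun hq => absurd hq (by omega)) (fun _ => hx3)).trans (pathV a3 p3 p4 ba3 ba3' bp3 bp3' bp4 bp4' (fun _ => hy3) (fun hq => absurd hq (by omega))))))) (by omega)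
          · rcases le_or_gt a0 a2 with hg | hg
            · exact absurd (hbest.2 _ ((pathH p1 a0 a2 bp1 bp1' ba0 ba0' ba2 ba2' (fun _ => hx1) (fun hq => absurd hq (by omega))).trans ((pathV a2 p1 p3 ba2 ba2' bp1 bp1' bp3 bp3' (fun hq => absurd hq (by omega)) (fun _ => hy2)).trans ((pathH p3 a2 a3 bp3 bp3' ba2 ba2' ba3 ba3' (fun hq => absurd hq (by omega)) (fun _ => hx3)).trans (pathV a3 p3 p4 ba3 ba3' bp3 bp3' bp4 bp4' (fun _ => hy3) (fun hq => absurd hq (by omega))))))) (by omega)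
            · rcases Bool.eq_false_or_eq_true (py a0) with hy0 | hy0
              · exact absurd (hbest.2 _ ((pathV a0 p1 p2 ba0 ba0' bp1 bp1' bp2 bp2' (fun _ => hy0) (fun hq => absurd hq (by omega))).trans ((pathH p2 a0 a2 bp2 bp2' ba0 ba0' ba2 ba2' (fun hq => absurd hq (by omega)) (fun _ => hx2)).trans ((pathV a2 p2 p3 ba2 ba2' bp2 bp2' bp3 bp3' (fun hq => absurd hq (by omega)) (fun _ => hy2)).trans ((pathH p3 a2 a3 bp3 bp3' ba2 ba2' ba3 ba3' (fun hq => absurd hq (by omega)) (fun _ => hx3)).trans (pathV a3 p3 p4 ba3 ba3' bp3 bp3' bp4 bp4' (fun _ => hy3) (fun hq => absurd hq (by omega)))))))) (by omega)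
              · exact absurd (hbest.2 _ ((pathV a0 p1 p3 ba0 ba0' bp1 bp1' bp3 bp3' (fun hq => absurd hq (by omega)) (fun _ => hy0)).trans ((pathH p3 a0 a3 bp3 bp3' ba0 ba0' ba3 ba3' (fun hq => absurd hq (by omega)) (fun _ => hx3)).trans (pathV a3 p3 p4 ba3 ba3' bp3 bp3' bp4 bp4' (fun _ => hy3) (fun hq => absurd hq (by omega)))))) (by omega)
        · have t3 : p4 < p3 := by
            rcases lt_trichotomy p4 p3 with hq | hq | hq
            · exact hq
            · exact absurd hq.symm nP4
            · exact Bool.noConfusion ((hy3t hq).symm.trans hy3)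
          refine ⟨[((p1 : ℤ), (a0 : ℤ)), ((p1 : ℤ), (a1 : ℤ)), ((p2 : ℤ), (a1 : ℤ)), ((p2 : ℤ), (a3 : ℤ)), ((p4 : ℤ), (a3 : ℤ))], ⟨?_, ?_, ?_, ?_, trivial⟩, rfl, rfl, ?_, by norm_num, ?_⟩
          · exact (segH p1 a0 a1 bp1 bp1' ba0 ba0' ba1 ba1' (fun _ => hx1) (fun hq => absurd hq (by omega)))
          · exact (segV a1 p1 p2 ba1 ba1' bp1 bp1' bp2 bp2' (fun _ => hy1) (fun hq => absurd hq (by omega)))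
          · exact (segH p2 a1 a3 bp2 bp2' ba1 ba1' ba3 ba3' (fun hq => absurd hq (by omega)) (fun _ => hx2))
          · exact (segV a3 p2 p4 ba3 ba3' bp2 bp2' bp4 bp4' (fun hq => absurd hq (by omega)) (fun _ => hy3))
          · simp [total, dist]; omega
          · exact Red.cons _ _ _ _ (by intro hq; simp [Prod.ext_iff] at hq; omega) (by rintro ⟨hq1, hq2⟩; simp at hq1 hq2 <;> omega) (by rintro ⟨hq1, hq2⟩; simp at hq1 hq2 <;> omega) (Red.cons _ _ _ _ (by intro hq; simp [Prod.ext_iff] at hq; omega) (by rintro ⟨hq1, hq2⟩; simp at hq1 hq2 <;> omega) (by rintro ⟨hq1, hq2⟩; simp at hq1 hq2 <;> omega) (Red.cons _ _ _ _ (by intro hq; simp [Prod.ext_iff] at hq; omega) (by rintro ⟨hq1, hq2⟩; simp at hq1 hq2 <;> omega) (by rintro ⟨hq1, hq2⟩; simp at hq1 hq2 <;> omega) (Red.two _ _ (by intro hq; simp [Prod.ext_iff] at hq; omega))))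

theorem ZE_xf' {a b : ZV} (h : ZE N M (fun i => !px i) (fun j => py (M - 1 - j)) a b) :
    ZE N M px py (xf M a) (xf M b) := by
  have h2 := ZE_xf (N := N) (M := M) (px := fun i => !px i)
    (py := fun j => py (M - 1 - j)) h
  have e1 : (fun i => !!px i) = px := by funext i; simp
  have e2 : (fun j => py (M - 1 - (M - 1 - j))) = py := by
    funext j; rw [show M - 1 - (M - 1 - j) = j by ring]
  rwa [e1, e2] at h2

theorem segOk_xf' {a b : ZV} (h : segOk N M (fun i => !px i) (fun j => py (M - 1 - j)) a b) :
    segOk N M px py (xf M a) (xf M b) := by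
  have h2 := segOk_xf (N := N) (M := M) (px := fun i => !px i)
    (py := fun j => py (M - 1 - j)) h
  have e1 : (fun i => !!px i) = px := by funext i; simp
  have e2 : (fun j => py (M - 1 - (M - 1 - j))) = py := by
    funext j; rw [show M - 1 - (M - 1 - j) = j by ring]
  rwa [e1, e2] at h2

theorem ZE_yf' {a b : ZV} (h : ZE N M (fun i => px (N - 1 - i)) (fun j => !py j) a b) :
    ZE N M px py (yf N a) (yf N b) := by
  have h2 := ZE_yf (N := N) (M := M) (px := fun i => px (N - 1 - i))
    (py := fun j => !py j) h
  have e1 : (fun i => px (N - 1 - (N - 1 - i))) = px := by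
    funext i; rw [show N - 1 - (N - 1 - i) = i by ring]
  have e2 : (fun j => !!py j) = py := by funext j; simp
  rwa [e1, e2] at h2

theorem segOk_yf' {a b : ZV} (h : segOk N M (fun i => px (N - 1 - i)) (fun j => !py j) a b) :
    segOk N M px py (yf N a) (yf N b) := by
  have h2 := segOk_yf (N := N) (M := M) (px := fun i => px (N - 1 - i))
    (py := fun j => !py j) h
  have e1 : (fun i => px (N - 1 - (N - 1 - i))) = px := by
    funext i; rw [show N - 1 - (N - 1 - i) = i by ring]
  have e2 : (fun j => !!py j) = py := by funext j; simp
  rwa [e1, e2] at h2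

theorem xf_inj : ∀ a b : ZV, xf M a = xf M b → a = b := by
  intro a b h
  rw [← xf_inv M a, h, xf_inv]

theorem yf_inj : ∀ a b : ZV, yf N a = yf N b → a = b := by
  intro a b h
  rw [← yf_inv N a, h, yf_inv]

theorem xf_ax : ∀ a b : ZV, ((xf M a).1 = (xf M b).1 ↔ a.1 = b.1) ∧
    ((xf M a).2 = (xf M b).2 ↔ a.2 = b.2) := by
  intro a b
  constructor
  · exact Iff.rfl
  · constructor
    · intro h; simp only [xf] at h; omega
    · intro h; simp only [xf]; omega

theorem yf_ax : ∀ a b : ZV, ((yf N a).1 = (yf N b).1 ↔ a.1 = b.1) ∧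
    ((yf N a).2 = (yf N b).2 ↔ a.2 = b.2) := by
  intro a b
  constructor
  · constructor
    · intro h; simp only [yf] at h; omega
    · intro h; simp only [yf]; omega
  · exact Iff.rfl

theorem swap_inj : ∀ a b : ZV, a.swap = b.swap → a = b := by
  intro a b h
  simpa using congrArg Prod.swap h

theorem swap_ax : ∀ a b : ZV, ((a.swap).1 = (b.swap).1 ↔ a.2 = b.2) ∧
    ((a.swap).2 = (b.swap).2 ↔ a.1 = b.1) := by
  intro a b; exact ⟨Iff.rfl, Iff.rfl⟩

/-- extraction + fully-oriented case -/
theorem L6xy (s0 s1 s2 s3 s4 s5 s6 : ZV) (k : ℕ)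
    (hch : Chn N M px py [s0, s1, s2, s3, s4, s5, s6])
    (hred : Red [s0, s1, s2, s3, s4, s5, s6])
    (htot : total [s0, s1, s2, s3, s4, s5, s6] = k)
    (hbest : Best N M px py s0 s6 k)
    (hax : s0.1 = s1.1) (hs : s0.2 < s1.2) (ht : s1.1 < s2.1) :
    ∃ l' : List ZV, Chn N M px py l' ∧ fst l' s0 ∧ lst l' s6 ∧
      total l' = k ∧ l'.length ≤ 6 ∧ Red l' := by
  obtain ⟨y0, x0⟩ := s0
  obtain ⟨y1, x1⟩ := s1
  obtain ⟨y2, x2⟩ := s2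
  obtain ⟨y3, x3⟩ := s3
  obtain ⟨y4, x4⟩ := s4
  obtain ⟨y5, x5⟩ := s5
  obtain ⟨y6, x6⟩ := s6
  obtain ⟨h01, h12, h23, h34, h45, h56, -⟩ := hch
  cases hred with | cons _ _ _ _ n01 tA1 tB1 hred =>
  cases hred with | cons _ _ _ _ n12 tA2 tB2 hred =>
  cases hred with | cons _ _ _ _ n23 tA3 tB3 hred =>
  cases hred with | cons _ _ _ _ n34 tA4 tB4 hred =>
  cases hred with | cons _ _ _ _ n45 tA5 tB5 hred =>
  cases hred with | two _ _ n56 =>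
  simp only at hax hs ht
  subst hax
  have e12 : x1 = x2 := by
    rcases segOk_ne_cases h12 n12 with ⟨e, -⟩ | ⟨e, -⟩
    · exact absurd ⟨rfl, e⟩ tA1
    · exact e
  subst e12
  have e23 : y2 = y3 := by
    rcases segOk_ne_cases h23 n23 with ⟨e, -⟩ | ⟨e, -⟩
    · exact e
    · exact absurd ⟨rfl, e⟩ tB2
  subst e23
  have e34 : x3 = x4 := by
    rcases segOk_ne_cases h34 n34 with ⟨e, -⟩ | ⟨e, -⟩
    · exact absurd ⟨rfl, e⟩ tA3
    · exact e
  subst e34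
  have e45 : y4 = y5 := by
    rcases segOk_ne_cases h45 n45 with ⟨e, -⟩ | ⟨e, -⟩
    · exact e
    · exact absurd ⟨rfl, e⟩ tB4
  subst e45
  have e56 : x5 = x6 := by
    rcases segOk_ne_cases h56 n56 with ⟨e, -⟩ | ⟨e, -⟩
    · exact absurd ⟨rfl, e⟩ tA5
    · exact e
  subst e56
  have q1 : (0 : ℤ) ≤ y0 := h01.1.1
  have q2 : y0 < N := h01.1.2.1
  have q3 : (0 : ℤ) ≤ x0 := h01.1.2.2.1
  have q4 : x0 < M := h01.1.2.2.2
  have q5 : (0 : ℤ) ≤ x1 := h01.2.1.2.2.1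
  have q6 : x1 < M := h01.2.1.2.2.2
  have q7 : (0 : ℤ) ≤ y2 := h12.2.1.1
  have q8 : y2 < N := h12.2.1.2.1
  have q9 : (0 : ℤ) ≤ x3 := h23.2.1.2.2.1
  have q10 : x3 < M := h23.2.1.2.2.2
  have q11 : (0 : ℤ) ≤ y4 := h34.2.1.1
  have q12 : y4 < N := h34.2.1.2.1
  have q13 : (0 : ℤ) ≤ x5 := h45.2.1.2.2.1
  have q14 : x5 < M := h45.2.1.2.2.2
  have q15 : (0 : ℤ) ≤ y6 := h56.2.1.1
  have q16 : y6 < N := h56.2.1.2.1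
  have H01 : (x0 < x1 → px y0 = true) ∧ (x1 < x0 → px y0 = false) := by
    obtain ⟨-, -, ⟨-, p, q⟩ | ⟨e, -, -⟩⟩ := h01
    · exact ⟨p, q⟩
    · simp only at e; omega
  have H12 : (y0 < y2 → py x1 = true) ∧ (y2 < y0 → py x1 = false) := by
    obtain ⟨-, -, ⟨e, -, -⟩ | ⟨-, p, q⟩⟩ := h12
    · simp only at e; omega
    · exact ⟨p, q⟩
  have H23 : (x1 < x3 → px y2 = true) ∧ (x3 < x1 → px y2 = false) := by
    obtain ⟨-, -, ⟨-, p, q⟩ | ⟨e, -, -⟩⟩ := h23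
    · exact ⟨p, q⟩
    · simp only at e; exact absurd (congrArg (Prod.mk y2) e) n23
  have H34 : (y2 < y4 → py x3 = true) ∧ (y4 < y2 → py x3 = false) := by
    obtain ⟨-, -, ⟨e, -, -⟩ | ⟨-, p, q⟩⟩ := h34
    · simp only at e; exact absurd (congrArg (fun z => (z, x3)) e) n34
    · exact ⟨p, q⟩
  have H45 : (x3 < x5 → px y4 = true) ∧ (x5 < x3 → px y4 = false) := by
    obtain ⟨-, -, ⟨-, p, q⟩ | ⟨e, -, -⟩⟩ := h45
    · exact ⟨p, q⟩
    · simp only at e; exact absurd (congrArg (Prod.mk y4) e) n45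
  have H56 : (y4 < y6 → py x5 = true) ∧ (y6 < y4 → py x5 = false) := by
    obtain ⟨-, -, ⟨e, -, -⟩ | ⟨-, p, q⟩⟩ := h56
    · simp only at e; exact absurd (congrArg (fun z => (z, x5)) e) n56
    · exact ⟨p, q⟩
  have hk : k = (x1 - x0).natAbs + (y2 - y0).natAbs + (x3 - x1).natAbs +
      (y4 - y2).natAbs + (x5 - x3).natAbs + (y6 - y4).natAbs := by
    simp [total, dist] at htot
    omega
  exact L6core y0 y2 y4 y6 x0 x1 x3 x5 k q1 q2 q7 q8 q11 q12 q15 q16 q3 q4 q5 q6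
    q9 q10 q13 q14 hs (H01.1 hs) ht (H12.1 ht)
    (fun hq => n23 (by rw [hq])) H23.1 H23.2
    (fun hq => n34 (by rw [hq])) H34.1 H34.2
    (fun hq => n45 (by rw [hq])) H45.1 H45.2
    (fun hq => n56 (by rw [hq])) H56.1 H56.2
    hk hbest

theorem L6x (s0 s1 s2 s3 s4 s5 s6 : ZV) (k : ℕ)
    (hch : Chn N M px py [s0, s1, s2, s3, s4, s5, s6])
    (hred : Red [s0, s1, s2, s3, s4, s5, s6])
    (htot : total [s0, s1, s2, s3, s4, s5, s6] = k)
    (hbest : Best N M px py s0 s6 k)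
    (hax : s0.1 = s1.1) (hs : s0.2 < s1.2) :
    ∃ l' : List ZV, Chn N M px py l' ∧ fst l' s0 ∧ lst l' s6 ∧
      total l' = k ∧ l'.length ≤ 6 ∧ Red l' := by
  have tA1 : ¬(s0.1 = s1.1 ∧ s1.1 = s2.1) := by
    cases hred with | cons _ _ _ _ _ h1 _ _ => exact h1
  rcases lt_trichotomy s1.1 s2.1 with ht | ht | ht
  · exact L6xy s0 s1 s2 s3 s4 s5 s6 k hch hred htot hbest hax hs ht
  · exact absurd ⟨hax, ht⟩ tA1
  · -- flip vertically
    obtain ⟨l', c', f', g', t', len', r'⟩ :=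
      L6xy (N := N) (M := M) (px := fun i => px (N - 1 - i)) (py := fun j => !py j)
        (yf N s0) (yf N s1) (yf N s2) (yf N s3) (yf N s4) (yf N s5) (yf N s6) k
        (Chn_map (fun a b h => segOk_yf h) _ hch)
        (Red_map_keep yf_inj yf_ax hred)
        (by
          have : total ([s0, s1, s2, s3, s4, s5, s6].map (yf N)) =
              total [s0, s1, s2, s3, s4, s5, s6] := total_map (dist_yf N) _
          simpa using this.trans htot)
        (Best_map (yf_inv N) (fun a b h => ZE_yf h) (fun a b h => ZE_yf' h) hbest)
        ((yf_ax s0 s1).1.mpr hax) hs (by simp only [yf]; omega)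
    refine ⟨l'.map (yf N), Chn_map (fun a b h => segOk_yf' h) _ c', ?_, ?_, ?_,
      by simpa using len', Red_map_keep yf_inj yf_ax r'⟩
    · have := fst_map (f := yf N) f'
      rwa [yf_inv] at this
    · have := lst_map (f := yf N) _ _ g'
      rwa [yf_inv] at this
    · rw [total_map (dist_yf N)]; exact t'

theorem L6H (s0 s1 s2 s3 s4 s5 s6 : ZV) (k : ℕ)
    (hch : Chn N M px py [s0, s1, s2, s3, s4, s5, s6])
    (hred : Red [s0, s1, s2, s3, s4, s5, s6])
    (htot : total [s0, s1, s2, s3, s4, s5, s6] = k)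
    (hbest : Best N M px py s0 s6 k)
    (hax : s0.1 = s1.1) :
    ∃ l' : List ZV, Chn N M px py l' ∧ fst l' s0 ∧ lst l' s6 ∧
      total l' = k ∧ l'.length ≤ 6 ∧ Red l' := by
  have n01 : s0 ≠ s1 := by
    cases hred with | cons _ _ _ _ h _ _ _ => exact h
  rcases lt_trichotomy s0.2 s1.2 with hs | hs | hs
  · exact L6x s0 s1 s2 s3 s4 s5 s6 k hch hred htot hbest hax hs
  · exact absurd (Prod.ext_iff.mpr ⟨hax, hs⟩) n01
  · -- flip horizontally
    obtain ⟨l', c', f', g', t', len', r'⟩ :=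
      L6x (N := N) (M := M) (px := fun i => !px i) (py := fun j => py (M - 1 - j))
        (xf M s0) (xf M s1) (xf M s2) (xf M s3) (xf M s4) (xf M s5) (xf M s6) k
        (Chn_map (fun a b h => segOk_xf h) _ hch)
        (Red_map_keep xf_inj xf_ax hred)
        (by
          have : total ([s0, s1, s2, s3, s4, s5, s6].map (xf M)) =
              total [s0, s1, s2, s3, s4, s5, s6] := total_map (dist_xf M) _
          simpa using this.trans htot)
        (Best_map (xf_inv M) (fun a b h => ZE_xf h) (fun a b h => ZE_xf' h) hbest)
        ((xf_ax s0 s1).1.mpr hax) (by simp only [xf]; omega)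
    refine ⟨l'.map (xf M), Chn_map (fun a b h => segOk_xf' h) _ c', ?_, ?_, ?_,
      by simpa using len', Red_map_keep xf_inj xf_ax r'⟩
    · have := fst_map (f := xf M) f'
      rwa [xf_inv] at this
    · have := lst_map (f := xf M) _ _ g'
      rwa [xf_inv] at this
    · rw [total_map (dist_xf M)]; exact t'

theorem swap_inv (a : ZV) : a.swap.swap = a := Prod.swap_swap a

theorem L6main (s0 s1 s2 s3 s4 s5 s6 : ZV) (k : ℕ)
    (hch : Chn N M px py [s0, s1, s2, s3, s4, s5, s6])
    (hred : Red [s0, s1, s2, s3, s4, s5, s6])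
    (htot : total [s0, s1, s2, s3, s4, s5, s6] = k)
    (hbest : Best N M px py s0 s6 k) :
    ∃ l' : List ZV, Chn N M px py l' ∧ fst l' s0 ∧ lst l' s6 ∧
      total l' = k ∧ l'.length ≤ 6 ∧ Red l' := by
  have n01 : s0 ≠ s1 := by
    cases hred with | cons _ _ _ _ h _ _ _ => exact h
  have h01 : segOk N M px py s0 s1 := hch.1
  rcases segOk_ne_cases h01 n01 with ⟨hax, -⟩ | ⟨hax, -⟩
  · exact L6H s0 s1 s2 s3 s4 s5 s6 k hch hred htot hbest hax
  · -- swap axes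
    obtain ⟨l', c', f', g', t', len', r'⟩ :=
      L6H (N := M) (M := N) (px := py) (py := px)
        s0.swap s1.swap s2.swap s3.swap s4.swap s5.swap s6.swap k
        (Chn_map (fun a b h => segOk_swap h) _ hch)
        (Red_map_swap swap_inj swap_ax hred)
        (by
          have : total ([s0, s1, s2, s3, s4, s5, s6].map Prod.swap) =
              total [s0, s1, s2, s3, s4, s5, s6] := total_map dist_swap _
          simpa using this.trans htot)
        (Best_map swap_inv (fun a b h => ZE_swap h) (fun a b h => ZE_swap h) hbest)
        hax
    refine ⟨l'.map Prod.swap, Chn_map (fun a b h => segOk_swap h) _ c', ?_, ?_, ?_,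
      by simpa using len', Red_map_swap swap_inj swap_ax r'⟩
    · have := fst_map (f := Prod.swap) f'
      rwa [swap_inv] at this
    · have := lst_map (f := Prod.swap) _ _ g'
      rwa [swap_inv] at this
    · rw [total_map dist_swap]; exact t'

theorem MAIN : ∀ (k : ℕ) (u v : ZV), Best N M px py u v k → inB N M u →
    ∃ l : List ZV, Chn N M px py l ∧ fst l u ∧ lst l v ∧ total l = k ∧
      l.length ≤ 6 ∧ Red l := by
  intro k
  induction k with
  | zero =>
    intro u v hbest _
    have : u = v := hbest.1
    subst this
    exact ⟨[u], trivial, rfl, rfl, rfl, by norm_num, Red.one u⟩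
  | succ k ih =>
    intro u v hbest hu
    obtain ⟨c, hc, hp⟩ := hbest.1
    have hbc : Best N M px py c v k :=
      ⟨hp, fun k' hp' => by have := hbest.2 (k' + 1) ⟨c, hc, hp'⟩; omega⟩
    obtain ⟨lc, cc, fc, gc, tc, lenc, rc⟩ := ih c v hbc hc.2.1
    match lc, fc, gc, tc, lenc, rc, cc with
    | [], fc, _, _, _, _, _ => exact fc.elim
    | c0 :: rest, fc, gc, tc, lenc, rc, cc =>
    have fc' : c = c0 := fc.symm
    subst fc'
    match rest, gc, tc, lenc, rc, cc with
    | [], gc, tc, lenc, rc, cc =>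
      -- single vertex: k = 0
      have hk : (0 : ℕ) = k := tc
      have hd : dist u c = 1 := ZE_dist hc
      refine ⟨[u, c], ⟨ZE_segOk hc, trivial⟩, rfl, gc, ?_, by norm_num,
        Red.two _ _ (ZE_ne hc)⟩
      show dist u c + 0 = k + 1
      omega
    | c2 :: rest2, gc, tc, lenc, rc, cc =>
      have hseg12 : segOk N M px py c c2 := cc.1
      have n12 : c ≠ c2 := by
        cases rc with
        | two _ _ h => exact h
        | cons _ _ _ _ h _ _ _ => exact h
      have hedge : (u.1 = c.1 ∧ u.2 ≠ c.2) ∨ (u.2 = c.2 ∧ u.1 ≠ c.1) := by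
        rcases hc with ⟨-, -, h | h | h | h⟩
        · exact Or.inl ⟨h.1, by omega⟩
        · exact Or.inl ⟨h.1, by omega⟩
        · exact Or.inr ⟨h.1, by omega⟩
        · exact Or.inr ⟨h.1, by omega⟩
      rcases segOk_ne_cases hseg12 n12 with ⟨e12, ne12⟩ | ⟨e12, ne12⟩
      · -- block 1 horizontal
        rcases hedge with ⟨eu, neu⟩ | ⟨eu, neu⟩
        · -- edge horizontal too: merge
          obtain ⟨sm, hdist, hne⟩ := seg_merge (ZE_segOk hc) hseg12 (ZE_ne hc) n12
            (Or.inl ⟨eu, e12⟩)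
          have hd : dist u c = 1 := ZE_dist hc
          refine ⟨u :: c2 :: rest2, ⟨sm, cc.2⟩, rfl, gc, ?_, by simpa using lenc, ?_⟩
          · show dist u c2 + total (c2 :: rest2) = k + 1
            have : dist c c2 + total (c2 :: rest2) = k := tc
            omega
          · match rest2, rc with
            | [], _ => exact Red.two _ _ hne
            | c3 :: rest3, rc =>
              cases rc with
              | cons _ _ _ _ _ tA tB rtail =>
                refine Red.cons _ _ _ _ hne ?_ ?_ rtail
                · rintro ⟨-, q2⟩; exact tA ⟨e12, q2⟩
                · rintro ⟨q1, -⟩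
                  exact hne (Prod.ext_iff.mpr ⟨eu.trans e12, q1⟩)
        · -- edge vertical, block horizontal: prepend
          have hred7 : Red (u :: c :: c2 :: rest2) := by
            refine Red.cons _ _ _ _ (ZE_ne hc) ?_ ?_ rc
            · rintro ⟨q1, -⟩; exact neu q1
            · rintro ⟨-, q2⟩; exact ne12 q2
          have hchn7 : Chn N M px py (u :: c :: c2 :: rest2) := ⟨ZE_segOk hc, cc⟩
          have htot7 : total (u :: c :: c2 :: rest2) = k + 1 := by
            show dist u c + total (c :: c2 :: rest2) = k + 1
            have hd : dist u c = 1 := ZE_dist hc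
            omega
          by_cases hlen : (c :: c2 :: rest2).length ≤ 5
          · exact ⟨u :: c :: c2 :: rest2, hchn7, rfl, gc, htot7, by simp only [List.length_cons] at hlen ⊢; omega, hred7⟩
          · match rest2, gc, hlen, hred7, hchn7, htot7, lenc with
            | [c3, c4, c5, c6], gc, hlen, hred7, hchn7, htot7, lenc =>
              have hc6 : c6 = v := gc
              subst hc6
              exact L6main u c c2 c3 c4 c5 c6 (k + 1) hchn7 hred7 htot7 hbest
            | [], gc, hlen, _, _, _, _ => exact absurd (by norm_num) hlen
            | [c3], gc, hlen, _, _, _, _ => exact absurd (by norm_num) hlen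
            | [c3, c4], gc, hlen, _, _, _, _ => exact absurd (by norm_num) hlen
            | [c3, c4, c5], gc, hlen, _, _, _, _ => exact absurd (by norm_num) hlen
            | c3 :: c4 :: c5 :: c6 :: c7 :: r, gc, hlen, _, _, _, lenc =>
              exact absurd lenc (by intro hq; simp only [List.length_cons] at hq; omega)
      · -- block 1 vertical
        rcases hedge with ⟨eu, neu⟩ | ⟨eu, neu⟩
        · -- edge horizontal, block vertical: prepend
          have hred7 : Red (u :: c :: c2 :: rest2) := by
            refine Red.cons _ _ _ _ (ZE_ne hc) ?_ ?_ rc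
            · rintro ⟨-, q2⟩; exact ne12 q2
            · rintro ⟨q1, -⟩; exact neu q1
          have hchn7 : Chn N M px py (u :: c :: c2 :: rest2) := ⟨ZE_segOk hc, cc⟩
          have htot7 : total (u :: c :: c2 :: rest2) = k + 1 := by
            show dist u c + total (c :: c2 :: rest2) = k + 1
            have hd : dist u c = 1 := ZE_dist hc
            omega
          by_cases hlen : (c :: c2 :: rest2).length ≤ 5
          · exact ⟨u :: c :: c2 :: rest2, hchn7, rfl, gc, htot7, by simp only [List.length_cons] at hlen ⊢; omega, hred7⟩
          · match rest2, gc, hlen, hred7, hchn7, htot7, lenc with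
            | [c3, c4, c5, c6], gc, hlen, hred7, hchn7, htot7, lenc =>
              have hc6 : c6 = v := gc
              subst hc6
              exact L6main u c c2 c3 c4 c5 c6 (k + 1) hchn7 hred7 htot7 hbest
            | [], gc, hlen, _, _, _, _ => exact absurd (by norm_num) hlen
            | [c3], gc, hlen, _, _, _, _ => exact absurd (by norm_num) hlen
            | [c3, c4], gc, hlen, _, _, _, _ => exact absurd (by norm_num) hlen
            | [c3, c4, c5], gc, hlen, _, _, _, _ => exact absurd (by norm_num) hlen
            | c3 :: c4 :: c5 :: c6 :: c7 :: r, gc, hlen, _, _, _, lenc =>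
              exact absurd lenc (by intro hq; simp only [List.length_cons] at hq; omega)
        · -- both vertical: merge
          obtain ⟨sm, hdist, hne⟩ := seg_merge (ZE_segOk hc) hseg12 (ZE_ne hc) n12
            (Or.inr ⟨eu, e12⟩)
          have hd : dist u c = 1 := ZE_dist hc
          refine ⟨u :: c2 :: rest2, ⟨sm, cc.2⟩, rfl, gc, ?_, by simpa using lenc, ?_⟩
          · show dist u c2 + total (c2 :: rest2) = k + 1
            have : dist c c2 + total (c2 :: rest2) = k := tc
            omega
          · match rest2, rc with
            | [], _ => exact Red.two _ _ hne
            | c3 :: rest3, rc =>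
              cases rc with
              | cons _ _ _ _ _ tA tB rtail =>
                refine Red.cons _ _ _ _ hne ?_ ?_ rtail
                · rintro ⟨q1, -⟩
                  exact hne (Prod.ext_iff.mpr ⟨q1, eu.trans e12⟩)
                · rintro ⟨-, q2⟩; exact tB ⟨e12, q2⟩

def clamp (x y : ℤ) (r : ℕ) : ℤ := if x ≤ y then min (x + r) y else max (x - r) y

def mv (a b : ZV) (r : ℕ) : ZV := (clamp a.1 b.1 r, clamp a.2 b.2 r)

theorem clamp_zero (x y : ℤ) : clamp x y 0 = x := by
  unfold clamp; split <;> omega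

theorem clamp_end {x y : ℤ} {r : ℕ} (h : (y - x).natAbs ≤ r) : clamp x y r = y := by
  unfold clamp; split <;> omega

theorem mv_zero (a b : ZV) : mv a b 0 = a := by
  simp [mv, clamp_zero]

theorem mv_end {a b : ZV} {r : ℕ} (h : dist a b ≤ r) : mv a b r = b := by
  have h1 : (b.1 - a.1).natAbs ≤ r := by simp [dist] at h; omega
  have h2 : (b.2 - a.2).natAbs ≤ r := by simp [dist] at h; omega
  simp [mv, clamp_end h1, clamp_end h2]

theorem mv_inB {a b : ZV} (ha : inB N M a) (hb : inB N M b) (r : ℕ) :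
    inB N M (mv a b r) := by
  obtain ⟨a1, a2, a3, a4⟩ := ha
  obtain ⟨b1, b2, b3, b4⟩ := hb
  refine ⟨?_, ?_, ?_, ?_⟩ <;> simp only [mv, clamp] <;> split <;> omega

theorem mv_step {a b : ZV} (h : segOk N M px py a b) {r : ℕ} (hr : r < dist a b) :
    ZE N M px py (mv a b r) (mv a b (r + 1)) ∧
      ((mv a b r).1 = (mv a b (r + 1)).1 ↔ a.1 = b.1) := by
  obtain ⟨ha, hb, hor⟩ := h
  obtain ⟨a1, a2, a3, a4⟩ := ha
  obtain ⟨b1, b2, b3, b4⟩ := hb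
  rcases hor with ⟨e, ht, hf⟩ | ⟨e, ht, hf⟩
  · -- horizontal
    have hd : r < (b.2 - a.2).natAbs := by simp [dist, e] at hr ⊢; omega
    have e1 : clamp a.1 b.1 r = a.1 := by rw [← e]; unfold clamp; split <;> omega
    have e1' : clamp a.1 b.1 (r + 1) = a.1 := by rw [← e]; unfold clamp; split <;> omega
    rcases lt_trichotomy a.2 b.2 with hc | hc | hc
    · have E : mv a b r = (a.1, a.2 + r) := by
        simp only [mv]; rw [e1, show clamp a.2 b.2 r = a.2 + r by unfold clamp; split <;> omega]
      have E' : mv a b (r + 1) = (a.1, a.2 + r + 1) := by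
        simp only [mv]
        rw [e1', show clamp a.2 b.2 (r + 1) = a.2 + r + 1 by unfold clamp; split <;> omega]
      rw [E, E']
      refine ⟨⟨⟨a1, a2, by simp; omega, by simp; omega⟩,
        ⟨a1, a2, by simp; omega, by simp; omega⟩,
        Or.inl ⟨rfl, ht hc, by simp⟩⟩, by simp; omega⟩
    · omega
    · have E : mv a b r = (a.1, a.2 - r) := by
        simp only [mv]; rw [e1, show clamp a.2 b.2 r = a.2 - r by unfold clamp; split <;> omega]
      have E' : mv a b (r + 1) = (a.1, a.2 - r - 1) := by
        simp only [mv]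
        rw [e1', show clamp a.2 b.2 (r + 1) = a.2 - r - 1 by unfold clamp; split <;> omega]
      rw [E, E']
      refine ⟨⟨⟨a1, a2, by simp; omega, by simp; omega⟩,
        ⟨a1, a2, by simp; omega, by simp; omega⟩,
        Or.inr (Or.inl ⟨rfl, hf hc, by simp⟩)⟩, by simp; omega⟩
  · -- vertical
    have hd : r < (b.1 - a.1).natAbs := by simp [dist, e] at hr ⊢; omega
    have e2 : clamp a.2 b.2 r = a.2 := by rw [← e]; unfold clamp; split <;> omega
    have e2' : clamp a.2 b.2 (r + 1) = a.2 := by rw [← e]; unfold clamp; split <;> omega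
    have hne : a.1 ≠ b.1 := by omega
    rcases lt_trichotomy a.1 b.1 with hc | hc | hc
    · have E : mv a b r = (a.1 + r, a.2) := by
        simp only [mv]; rw [e2, show clamp a.1 b.1 r = a.1 + r by unfold clamp; split <;> omega]
      have E' : mv a b (r + 1) = (a.1 + r + 1, a.2) := by
        simp only [mv]
        rw [e2', show clamp a.1 b.1 (r + 1) = a.1 + r + 1 by unfold clamp; split <;> omega]
      rw [E, E']
      refine ⟨⟨⟨by simp; omega, by simp; omega, a3, a4⟩,
        ⟨by simp; omega, by simp; omega, a3, a4⟩,
        Or.inr (Or.inr (Or.inl ⟨rfl, ht hc, by simp⟩))⟩, by simp; omega⟩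
    · omega
    · have E : mv a b r = (a.1 - r, a.2) := by
        simp only [mv]; rw [e2, show clamp a.1 b.1 r = a.1 - r by unfold clamp; split <;> omega]
      have E' : mv a b (r + 1) = (a.1 - r - 1, a.2) := by
        simp only [mv]
        rw [e2', show clamp a.1 b.1 (r + 1) = a.1 - r - 1 by unfold clamp; split <;> omega]
      rw [E, E']
      refine ⟨⟨⟨by simp; omega, by simp; omega, a3, a4⟩,
        ⟨by simp; omega, by simp; omega, a3, a4⟩,
        Or.inr (Or.inr (Or.inr ⟨rfl, hf hc, by simp⟩))⟩, by simp; omega⟩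

def swalk : List ZV → ℕ → ZV
  | [], _ => (0, 0)
  | [a], _ => a
  | a :: b :: l, t => if t < dist a b then mv a b t else swalk (b :: l) (t - dist a b)

def sums : List ZV → List ℕ
  | a :: b :: l => dist a b :: (sums (b :: l)).map (· + dist a b)
  | _ => []

theorem dist_eq_zero {a b : ZV} (h : dist a b = 0) : a = b := by
  simp [dist] at h
  exact Prod.ext_iff.mpr ⟨by omega, by omega⟩

theorem swalk_zero : ∀ (l : List ZV) (a : ZV), swalk (a :: l) 0 = a := by
  intro l
  induction l with
  | nil => intro a; rfl
  | cons b l ih =>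
    intro a
    show (if 0 < dist a b then mv a b 0 else swalk (b :: l) (0 - dist a b)) = a
    split
    · exact mv_zero a b
    · have : dist a b = 0 := by omega
      rw [show 0 - dist a b = 0 by omega, ih b, dist_eq_zero this]

theorem swalk_last : ∀ (l : List ZV) (a : ZV) (t : ℕ), total (a :: l) ≤ t →
    swalk (a :: l) t = (a :: l).getLast (by simp) := by
  intro l
  induction l with
  | nil => intro a t _; rfl
  | cons b l ih =>
    intro a t ht
    have htot : total (a :: b :: l) = dist a b + total (b :: l) := rfl
    show (if t < dist a b then mv a b t else swalk (b :: l) (t - dist a b)) = _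
    rw [if_neg (by omega)]
    rw [List.getLast_cons (by simp)]
    exact ih b (t - dist a b) (by omega)

theorem swalk_edge : ∀ (l : List ZV) (a : ZV), Chn N M px py (a :: l) →
    ∀ t, t < total (a :: l) →
      ZE N M px py (swalk (a :: l) t) (swalk (a :: l) (t + 1)) := by
  intro l
  induction l with
  | nil => intro a _ t ht; simp [total] at ht
  | cons b l ih =>
    intro a hch t ht
    have htot : total (a :: b :: l) = dist a b + total (b :: l) := rfl
    by_cases hc : t < dist a b
    · have e1 : swalk (a :: b :: l) t = mv a b t := if_pos hc
      have e2 : swalk (a :: b :: l) (t + 1) = mv a b (t + 1) := by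
        show (if t + 1 < dist a b then mv a b (t + 1) else swalk (b :: l) (t + 1 - dist a b)) = _
        split
        · rfl
        · have : t + 1 = dist a b := by omega
          rw [this, Nat.sub_self, swalk_zero]
          exact (mv_end (le_refl _)).symm
      rw [e1, e2]
      exact (mv_step hch.1 hc).1
    · have e1 : swalk (a :: b :: l) t = swalk (b :: l) (t - dist a b) := if_neg hc
      have e2 : swalk (a :: b :: l) (t + 1) = swalk (b :: l) (t + 1 - dist a b) :=
        if_neg (by omega)
      rw [e1, e2, show t + 1 - dist a b = (t - dist a b) + 1 by omega]
      exact ih b hch.2 (t - dist a b) (by omega)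

theorem swalk_inB : ∀ (l : List ZV) (a : ZV), Chn N M px py (a :: l) → inB N M a →
    ∀ t, inB N M (swalk (a :: l) t) := by
  intro l
  induction l with
  | nil => intro a _ ha t; exact ha
  | cons b l ih =>
    intro a hch ha t
    show inB N M (if t < dist a b then mv a b t else swalk (b :: l) (t - dist a b))
    split
    · exact mv_inB hch.1.1 hch.1.2.1 t
    · exact ih b hch.2 hch.1.2.1 _

theorem swalk_noturn : ∀ (l : List ZV) (a : ZV), Chn N M px py (a :: l) →
    ∀ t, 0 < t → t < total (a :: l) → t ∉ sums (a :: l) →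
      ((swalk (a :: l) (t - 1)).1 = (swalk (a :: l) t).1 ↔
        (swalk (a :: l) t).1 = (swalk (a :: l) (t + 1)).1) := by
  intro l
  induction l with
  | nil => intro a _ t _ ht; simp [total] at ht
  | cons b l ih =>
    intro a hch t ht0 ht hs
    have hs1 : t ≠ dist a b := by
      intro he; exact hs (by rw [he]; exact List.mem_cons_self)
    have hs2 : ∀ s ∈ sums (b :: l), s + dist a b ≠ t := by
      intro s hsm he
      exact hs (by rw [← he]; exact List.mem_cons_of_mem _ (List.mem_map_of_mem hsm))
    by_cases hc : t < dist a b
    · have e0 : swalk (a :: b :: l) (t - 1) = mv a b (t - 1) := if_pos (by omega)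
      have e1 : swalk (a :: b :: l) t = mv a b t := if_pos hc
      have e2 : swalk (a :: b :: l) (t + 1) = mv a b (t + 1) := by
        show (if t + 1 < dist a b then mv a b (t + 1) else swalk (b :: l) (t + 1 - dist a b)) = _
        split
        · rfl
        · have : t + 1 = dist a b := by omega
          rw [this, Nat.sub_self, swalk_zero]
          exact (mv_end (le_refl _)).symm
      rw [e0, e1, e2]
      have m1 := (mv_step hch.1 (show t - 1 < dist a b by omega)).2
      have m2 := (mv_step hch.1 hc).2
      rw [show t - 1 + 1 = t by omega] at m1
      rw [m1, m2]
    · -- t > dist a b (since t ≠ dist a b)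
      have hgt : dist a b < t := by omega
      have e0 : swalk (a :: b :: l) (t - 1) = swalk (b :: l) (t - 1 - dist a b) :=
        if_neg (by omega)
      have e1 : swalk (a :: b :: l) t = swalk (b :: l) (t - dist a b) := if_neg (by omega)
      have e2 : swalk (a :: b :: l) (t + 1) = swalk (b :: l) (t + 1 - dist a b) :=
        if_neg (by omega)
      rw [e0, e1, e2, show t - 1 - dist a b = (t - dist a b) - 1 by omega,
        show t + 1 - dist a b = (t - dist a b) + 1 by omega]
      refine ih b hch.2 (t - dist a b) (by omega) ?_ ?_
      · have : total (a :: b :: l) = dist a b + total (b :: l) := rfl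
        omega
      · intro hmem
        exact hs2 _ hmem (by omega)

def zi (n : ℕ) (hn : 0 < n) (i : ℤ) : Fin n := ⟨i.toNat % n, Nat.mod_lt _ hn⟩

def pxd (n : ℕ) (hn : 0 < n) (dx : Fin n → Bool) : ℤ → Bool := fun i => dx (zi n hn i)

def embp {n m : ℕ} (u : Fin n × Fin m) : ZV := ((u.1 : ℤ), (u.2 : ℤ))

def toF {n m : ℕ} (hn : 0 < n) (hm : 0 < m) (a : ZV) : Fin n × Fin m :=
  (zi n hn a.1, zi m hm a.2)

theorem zi_coe {n : ℕ} (hn : 0 < n) (f : Fin n) : zi n hn (f : ℤ) = f := by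
  apply Fin.ext
  simp [zi]
  exact Nat.mod_eq_of_lt f.isLt

theorem zi_val {n : ℕ} (hn : 0 < n) {i : ℤ} (h0 : 0 ≤ i) (h1 : i < n) :
    ((zi n hn i : ℕ) : ℤ) = i := by
  simp only [zi]
  rw [Nat.mod_eq_of_lt (by omega)]
  omega

theorem toF_embp {n m : ℕ} (hn : 0 < n) (hm : 0 < m) (u : Fin n × Fin m) :
    toF hn hm (embp u) = u :=
  Prod.ext_iff.mpr ⟨zi_coe hn u.1, zi_coe hm u.2⟩

theorem embp_inB {n m : ℕ} (hn : 0 < n) (hm : 0 < m) (u : Fin n × Fin m) :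
    inB n m (embp u) := by
  obtain ⟨⟨i, hi⟩, ⟨j, hj⟩⟩ := u
  refine ⟨by simp [embp], by simp [embp]; omega, by simp [embp], by simp [embp]; omega⟩

section Bridge

variable {n m : ℕ} (hn : 0 < n) (hm : 0 < m) (dx : Fin n → Bool) (dy : Fin m → Bool)

theorem edge_to {u v : Fin n × Fin m} (h : owrnEdge n m dx dy u v) :
    ZE n m (pxd n hn dx) (pxd m hm dy) (embp u) (embp v) := by
  refine ⟨embp_inB hn hm u, embp_inB hn hm v, ?_⟩
  rcases h with ⟨h1, h2, h3⟩ | ⟨h1, h2, h3⟩ | ⟨h1, h2, h3⟩ | ⟨h1, h2, h3⟩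
  · refine Or.inl ⟨by simp [embp, h1], ?_, by simp [embp]; omega⟩
    show dx (zi n hn (u.1 : ℤ)) = true
    rwa [zi_coe]
  · refine Or.inr (Or.inl ⟨by simp [embp, h1], ?_, by simp [embp]; omega⟩)
    show dx (zi n hn (u.1 : ℤ)) = false
    rwa [zi_coe]
  · refine Or.inr (Or.inr (Or.inl ⟨by simp [embp, h1], ?_, by simp [embp]; omega⟩))
    show dy (zi m hm (u.2 : ℤ)) = true
    rwa [zi_coe]
  · refine Or.inr (Or.inr (Or.inr ⟨by simp [embp, h1], ?_, by simp [embp]; omega⟩))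
    show dy (zi m hm (u.2 : ℤ)) = false
    rwa [zi_coe]

theorem edge_from {a b : ZV} (h : ZE n m (pxd n hn dx) (pxd m hm dy) a b) :
    owrnEdge n m dx dy (toF hn hm a) (toF hn hm b) := by
  obtain ⟨⟨a1, a2, a3, a4⟩, ⟨b1, b2, b3, b4⟩, hor⟩ := h
  rcases hor with ⟨h1, h2, h3⟩ | ⟨h1, h2, h3⟩ | ⟨h1, h2, h3⟩ | ⟨h1, h2, h3⟩
  · refine Or.inl ⟨by simp [toF, h1], h2, ?_⟩
    show (zi m hm b.2 : ℕ) = (zi m hm a.2 : ℕ) + 1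
    simp only [zi]
    rw [Nat.mod_eq_of_lt (by omega), Nat.mod_eq_of_lt (by omega)]
    omega
  · refine Or.inr (Or.inl ⟨by simp [toF, h1], h2, ?_⟩)
    show (zi m hm a.2 : ℕ) = (zi m hm b.2 : ℕ) + 1
    simp only [zi]
    rw [Nat.mod_eq_of_lt (by omega), Nat.mod_eq_of_lt (by omega)]
    omega
  · refine Or.inr (Or.inr (Or.inl ⟨by simp [toF, h1], h2, ?_⟩))
    show (zi n hn b.1 : ℕ) = (zi n hn a.1 : ℕ) + 1
    simp only [zi]
    rw [Nat.mod_eq_of_lt (by omega), Nat.mod_eq_of_lt (by omega)]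
    omega
  · refine Or.inr (Or.inr (Or.inr ⟨by simp [toF, h1], h2, ?_⟩))
    show (zi n hn a.1 : ℕ) = (zi n hn b.1 : ℕ) + 1
    simp only [zi]
    rw [Nat.mod_eq_of_lt (by omega), Nat.mod_eq_of_lt (by omega)]
    omega

theorem axis_iff {a b : ZV} (ha : inB n m a) (hb : inB n m b) :
    (toF hn hm a).1 = (toF hn hm b).1 ↔ a.1 = b.1 := by
  obtain ⟨a1, a2, -, -⟩ := ha
  obtain ⟨b1, b2, -, -⟩ := hb
  show zi n hn a.1 = zi n hn b.1 ↔ _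
  rw [Fin.ext_iff]
  simp only [zi]
  rw [Nat.mod_eq_of_lt (by omega), Nat.mod_eq_of_lt (by omega)]
  omega

theorem walk_to_path : ∀ (k : ℕ) (w : ℕ → Fin n × Fin m) (u v : Fin n × Fin m),
    owrnIsWalk n m dx dy k w u v →
    ZPath n m (pxd n hn dx) (pxd m hm dy) k (embp u) (embp v) := by
  intro k
  induction k with
  | zero =>
    intro w u v ⟨h1, h2, _⟩
    show embp u = embp v
    rw [← h1, h2]
  | succ k ih =>
    intro w u v ⟨h1, h2, h3⟩
    refine ⟨embp (w 1), edge_to hn hm dx dy (h1 ▸ h3 0 (by omega)), ?_⟩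
    exact ih (fun t => w (t + 1)) (w 1) v ⟨rfl, h2, fun t ht => h3 (t + 1) (by omega)⟩

theorem reach_to_path {u v : Fin n × Fin m} (h : owrnReachable n m dx dy u v) :
    ∃ k, ZPath n m (pxd n hn dx) (pxd m hm dy) k (embp u) (embp v) := by
  induction h with
  | refl => exact ⟨0, rfl⟩
  | tail _ hbc ih =>
    obtain ⟨k, hp⟩ := ih
    exact ⟨k + 1, hp.snoc (edge_to hn hm dx dy hbc)⟩

theorem realize6 (s0 s1 s2 s3 s4 s5 : ZV)
    (hch : Chn n m (pxd n hn dx) (pxd m hm dy) [s0, s1, s2, s3, s4, s5])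
    (h0 : inB n m s0) :
    ∃ w : ℕ → Fin n × Fin m,
      owrnIsWalk n m dx dy (total [s0, s1, s2, s3, s4, s5]) w
        (toF hn hm s0) (toF hn hm s5) ∧
      owrnTurnCount n m (total [s0, s1, s2, s3, s4, s5]) w ≤ 4 := by
  set L : List ZV := [s0, s1, s2, s3, s4, s5] with hL
  set k := total L with hk
  refine ⟨fun t => toF hn hm (swalk L t), ⟨?_, ?_, ?_⟩, ?_⟩
  · show toF hn hm (swalk L 0) = toF hn hm s0
    rw [show swalk L 0 = s0 from swalk_zero _ _]
  · show toF hn hm (swalk L k) = toF hn hm s5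
    rw [show swalk L k = s5 from swalk_last [s1,s2,s3,s4,s5] s0 k (le_refl _)]
  · intro t ht
    exact edge_from hn hm dx dy (swalk_edge _ _ hch t ht)
  · -- turn count
    have hsub : ((Finset.Ico 1 k).filter
        (fun t => ¬(((toF hn hm (swalk L (t - 1))).1 = (toF hn hm (swalk L t)).1) ↔
          ((toF hn hm (swalk L t)).1 = (toF hn hm (swalk L (t + 1))).1)))) ⊆
        (sums L).toFinset.erase k := by
      intro t ht
      rw [Finset.mem_filter, Finset.mem_Ico] at ht
      obtain ⟨⟨ht1, ht2⟩, hturn⟩ := ht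
      rw [Finset.mem_erase, List.mem_toFinset]
      constructor
      · omega
      · by_contra hnot
        have hno := swalk_noturn [s1,s2,s3,s4,s5] s0 hch t (by omega) ht2 hnot
        have i1 := swalk_inB [s1,s2,s3,s4,s5] s0 hch h0 (t - 1)
        have i2 := swalk_inB [s1,s2,s3,s4,s5] s0 hch h0 t
        have i3 := swalk_inB [s1,s2,s3,s4,s5] s0 hch h0 (t + 1)
        rw [axis_iff hn hm i1 i2, axis_iff hn hm i2 i3] at hturn
        exact hturn hno
    have hcard := Finset.card_le_card hsub
    have h1 : ((sums L).toFinset.erase k).card ≤ (sums L).toFinset.card - 1 := by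
      by_cases hmem : k ∈ (sums L).toFinset
      · rw [Finset.card_erase_of_mem hmem]
      · rw [Finset.erase_eq_of_notMem hmem]
        -- k = total L is the last partial sum, so it IS a member; contradiction
        exfalso
        apply hmem
        rw [List.mem_toFinset]
        show k ∈ sums [s0, s1, s2, s3, s4, s5]
        have : k = dist s0 s1 + (dist s1 s2 + (dist s2 s3 + (dist s3 s4 + dist s4 s5))) := by
          rw [hk, hL]; simp only [total]; omega
        simp [sums, this]
        omega
    have h2 : (sums L).toFinset.card ≤ 5 := by
      have := (sums L).toFinset_card_le
      have hlen : (sums L).length = 5 := by rw [hL]; simp [sums]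
      omega
    exact hcard.trans (by omega)

end Bridge

theorem segOk_refl {a : ZV} (h : inB N M a) : segOk N M px py a a :=
  ⟨h, h, Or.inl ⟨rfl, fun h' => absurd h' (lt_irrefl _), fun h' => absurd h' (lt_irrefl _)⟩⟩

theorem pad_chain {a b : ZV} : ∀ (l : List ZV), Chn N M px py l → l.length ≤ 6 →
    fst l a → lst l b → inB N M a →
    ∃ s1 s2 s3 s4 s5 : ZV, Chn N M px py [a, s1, s2, s3, s4, s5] ∧ s5 = b ∧
      total [a, s1, s2, s3, s4, s5] = total l := by
  intro l hch hlen hfst hlst hinB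
  rcases l with - | ⟨x1, - | ⟨x2, - | ⟨x3, - | ⟨x4, - | ⟨x5, - | ⟨x6, - | ⟨x7, r⟩⟩⟩⟩⟩⟩⟩
  · exact hfst.elim
  · have h1 : x1 = a := hfst
    subst h1
    exact ⟨x1, x1, x1, x1, x1, ⟨segOk_refl hinB, segOk_refl hinB, segOk_refl hinB,
      segOk_refl hinB, segOk_refl hinB, trivial⟩, hlst, by simp [total, dist]⟩
  · have h1 : x1 = a := hfst
    subst h1
    have hb : inB N M x2 := hch.1.2.1
    exact ⟨x2, x2, x2, x2, x2, ⟨hch.1, segOk_refl hb, segOk_refl hb, segOk_refl hb,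
      segOk_refl hb, trivial⟩, hlst, by simp [total, dist]⟩
  · have h1 : x1 = a := hfst
    subst h1
    have hb : inB N M x3 := hch.2.1.2.1
    exact ⟨x2, x3, x3, x3, x3, ⟨hch.1, hch.2.1, segOk_refl hb, segOk_refl hb,
      segOk_refl hb, trivial⟩, hlst, by simp [total, dist]⟩
  · have h1 : x1 = a := hfst
    subst h1
    have hb : inB N M x4 := hch.2.2.1.2.1
    exact ⟨x2, x3, x4, x4, x4, ⟨hch.1, hch.2.1, hch.2.2.1, segOk_refl hb,
      segOk_refl hb, trivial⟩, hlst, by simp [total, dist]⟩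
  · have h1 : x1 = a := hfst
    subst h1
    have hb : inB N M x5 := hch.2.2.2.1.2.1
    exact ⟨x2, x3, x4, x5, x5, ⟨hch.1, hch.2.1, hch.2.2.1, hch.2.2.2.1,
      segOk_refl hb, trivial⟩, hlst, by simp [total, dist]⟩
  · have h1 : x1 = a := hfst
    subst h1
    exact ⟨x2, x3, x4, x5, x6, ⟨hch.1, hch.2.1, hch.2.2.1, hch.2.2.2.1,
      hch.2.2.2.2.1, trivial⟩, hlst, rfl⟩
  · exact absurd hlen (by intro hq; simp only [List.length_cons] at hq; omega)

end OWRN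


/-- If `v` is reachable from `u` in an OWRN, then there is a directed walk
from `u` to `v` of minimal length having at most four turns. -/
theorem owrn_shortest_path_at_most_four_turns (n m : ℕ) (hn : 2 ≤ n) (hm : 2 ≤ m)
    (dx : Fin n → Bool) (dy : Fin m → Bool) (u v : Fin n × Fin m)
    (hreach : owrnReachable n m dx dy u v) :
    ∃ (k : ℕ) (w : ℕ → Fin n × Fin m),
      owrnIsWalk n m dx dy k w u v ∧
      (∀ (k' : ℕ) (w' : ℕ → Fin n × Fin m),
        owrnIsWalk n m dx dy k' w' u v → k ≤ k') ∧
      owrnTurnCount n m k w ≤ 4 := by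
  classical
  have hn' : 0 < n := by omega
  have hm' : 0 < m := by omega
  have hex := OWRN.reach_to_path hn' hm' dx dy hreach
  have hbest : OWRN.Best n m (OWRN.pxd n hn' dx) (OWRN.pxd m hm' dy)
      (OWRN.embp u) (OWRN.embp v) (Nat.find hex) :=
    ⟨Nat.find_spec hex, fun k' hp' => Nat.find_min' hex hp'⟩
  obtain ⟨l, hch, hfst, hlst, htot, hlen, -⟩ :=
    OWRN.MAIN (Nat.find hex) _ _ hbest (OWRN.embp_inB hn' hm' u)
  obtain ⟨s1, s2, s3, s4, s5, chn6, hs5, htot6⟩ :=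
    OWRN.pad_chain l hch hlen hfst hlst (OWRN.embp_inB hn' hm' u)
  obtain ⟨w, hw, hturn⟩ :=
    OWRN.realize6 hn' hm' dx dy (OWRN.embp u) s1 s2 s3 s4 s5 chn6 (OWRN.embp_inB hn' hm' u)
  have e : OWRN.total [OWRN.embp u, s1, s2, s3, s4, s5] = Nat.find hex := htot6.trans htot
  rw [e, OWRN.toF_embp, hs5, OWRN.toF_embp] at hw
  rw [e] at hturn
  exact ⟨Nat.find hex, w, hw,
    fun k' w' hw' => hbest.2 k' (OWRN.walk_to_path hn' hm' dx dy k' w' u v hw'), hturn⟩
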